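/- arXiv:1608.05652 — 15 statements merged into one kernel-verified Lean document; each statement's English description precedes it below -/
import Mathlib

section
/- For all real k>0, d>0, 0<h<d, and ρ>1, the discriminant D = b² − 4(ρ−1)·cosh(kd)·sinh(kh)·sinh(k(d−h)) is strictly positive, where b = sinh(kd) + (ρ−1)·cosh(kh)·sinh(k(d−h)). -/
open Real

theorem discriminant_pos (k d h ρ : ℝ) (hk : 0 < k) (hd : 0 < d)
    (hh : 0 < h) (hhd : h < d) (hρ : 1 < ρ) :
    0 < (sinh (k*d) + (ρ-1) * cosh (k*h) * sinh (k*(d-h)))^2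
      - 4*(ρ-1) * cosh (k*d) * sinh (k*h) * sinh (k*(d-h)) := by
  have key : sinh (k*d) * cosh (k*h) - cosh (k*d) * sinh (k*h) = sinh (k*(d-h)) := by
    rw [← Real.sinh_sub]; ring_nf
  have hb : 0 < sinh (k*(d-h)) := Real.sinh_pos_iff.2 (by nlinarith)
  nlinarith [sq_nonneg (sinh (k*d) - (ρ-1) * cosh (k*h) * sinh (k*(d-h))),
    mul_pos (mul_pos (by linarith : (0:ℝ) < ρ - 1) hb) hb]
end

section
/- Fix k>0, d>0, 0<h<d. Regarded as a quadratic polynomial in the variable t = ρ−1 > 0, the discriminant D(t) = (sinh(kd) + t·cosh(kh)·sinh(k(d−h)))² − 4t·cosh(kd)·sinh(kh)·sinh(k(d−h)) attains its minimum over all real t at t* = (2·cosh(kd)·sinh(kh) − sinh(kd)·cosh(kh)) / (cosh²(kh)·sinh(k(d−h))), and D(t*) = 4·cosh(kd)·sinh(kh)·sinh(k(d−h)) / cosh²(kh) > 0. -/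
open Real

theorem discriminant_min (k d h : ℝ) (hk : 0 < k) (hd : 0 < d)
    (hh : 0 < h) (hhd : h < d) :
    let Dq : ℝ → ℝ := fun t =>
      (sinh (k*d) + t * cosh (k*h) * sinh (k*(d-h)))^2
        - 4*t * cosh (k*d) * sinh (k*h) * sinh (k*(d-h))
    let tstar : ℝ := (2 * cosh (k*d) * sinh (k*h) - sinh (k*d) * cosh (k*h))
        / (cosh (k*h)^2 * sinh (k*(d-h)))
    (∀ t : ℝ, Dq tstar ≤ Dq t) ∧
      Dq tstar = 4 * cosh (k*d) * sinh (k*h) * sinh (k*(d-h)) / cosh (k*h)^2 ∧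
      0 < Dq tstar := by
  intro Dq tstar
  have hC : 0 < cosh (k*h) := Real.cosh_pos _
  have hS : 0 < sinh (k*(d-h)) := Real.sinh_pos_iff.mpr (by nlinarith)
  have hCd : 0 < cosh (k*d) := Real.cosh_pos _
  have hSh : 0 < sinh (k*h) := Real.sinh_pos_iff.mpr (by positivity)
  have key : sinh (k*(d-h)) = sinh (k*d) * cosh (k*h) - cosh (k*d) * sinh (k*h) := by
    rw [show k*(d-h) = k*d - k*h by ring, Real.sinh_sub]
  have hS' : 0 < sinh (k*d) * cosh (k*h) - cosh (k*d) * sinh (k*h) := key ▸ hS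
  have hval : Dq tstar = 4 * cosh (k*d) * sinh (k*h) * sinh (k*(d-h)) / cosh (k*h)^2 := by
    simp only [Dq, tstar]
    rw [key]
    field_simp
    ring
  have hdiff : ∀ t : ℝ, Dq t - Dq tstar =
      (cosh (k*h) * sinh (k*(d-h)) * (t - tstar))^2 := by
    intro t
    simp only [Dq, tstar]
    rw [key]
    field_simp
    ring
  refine ⟨fun t => ?_, hval, ?_⟩
  · have := hdiff t
    nlinarith [sq_nonneg (cosh (k*h) * sinh (k*(d-h)) * (t - tstar))]
  · rw [hval]
    exact div_pos (by positivity) (by positivity)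
end

section
/- For k>0, d>0, 0<h<d, ρ>1, both roots ν± = k·(b ± √D)/(2·cosh(kd)) of the quadratic ν²·cosh(kd) − ν·k·b + k²·(ρ−1)·sinh(kh)·sinh(k(d−h)) = 0 are real and strictly positive, where b = sinh(kd) + (ρ−1)·cosh(kh)·sinh(k(d−h)) and D = b² − 4(ρ−1)·cosh(kd)·sinh(kh)·sinh(k(d−h)). -/
open Real

theorem roots_real_positive (k d h ρ : ℝ) (hk : 0 < k) (hd : 0 < d)
    (hh : 0 < h) (hhd : h < d) (hρ : 1 < ρ) :
    let b : ℝ := sinh (k*d) + (ρ-1) * cosh (k*h) * sinh (k*(d-h))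
    let D : ℝ := b^2 - 4*(ρ-1) * cosh (k*d) * sinh (k*h) * sinh (k*(d-h))
    let νp : ℝ := k * (b + Real.sqrt D) / (2 * cosh (k*d))
    let νm : ℝ := k * (b - Real.sqrt D) / (2 * cosh (k*d))
    0 ≤ D ∧ 0 < νm ∧ 0 < νp ∧
      (νm^2 * cosh (k*d) - νm * k * b
        + k^2 * (ρ-1) * sinh (k*h) * sinh (k*(d-h)) = 0) ∧
      (νp^2 * cosh (k*d) - νp * k * b
        + k^2 * (ρ-1) * sinh (k*h) * sinh (k*(d-h)) = 0) := by
  intro b D νp νm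
  have hkd : k*d = k*h + k*(d-h) := by ring
  have hs : sinh (k*d) = sinh (k*h) * cosh (k*(d-h)) + cosh (k*h) * sinh (k*(d-h)) := by
    rw [hkd, Real.sinh_add]
  have hc : cosh (k*d) = cosh (k*h) * cosh (k*(d-h)) + sinh (k*h) * sinh (k*(d-h)) := by
    rw [hkd, Real.cosh_add]
  have h1 : cosh (k*h)^2 - sinh (k*h)^2 = 1 := Real.cosh_sq_sub_sinh_sq (k*h)
  have hs1 : 0 < sinh (k*h) := Real.sinh_pos_iff.mpr (by positivity)
  have hs2 : 0 < sinh (k*(d-h)) := Real.sinh_pos_iff.mpr (by nlinarith)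
  have hc1 : 0 < cosh (k*h) := Real.cosh_pos _
  have hc2 : 0 < cosh (k*(d-h)) := Real.cosh_pos _
  have hC : 0 < cosh (k*d) := Real.cosh_pos _
  have hr : 0 < ρ - 1 := by linarith
  have hDval : D = (sinh (k*d) - (ρ-1)*cosh (k*h)*sinh (k*(d-h)))^2
      + 4*(ρ-1)*sinh (k*(d-h))^2 := by
    show (sinh (k*d) + (ρ-1) * cosh (k*h) * sinh (k*(d-h)))^2
        - 4*(ρ-1) * cosh (k*d) * sinh (k*h) * sinh (k*(d-h)) = _
    rw [hc, hs]
    linear_combination (4*(ρ-1)*sinh (k*(d-h))^2) * h1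
  have hD0 : 0 < D := by rw [hDval]; positivity
  have hsq : Real.sqrt D ^ 2 = D := Real.sq_sqrt hD0.le
  have hb : 0 < b := by
    have : 0 < sinh (k*d) := Real.sinh_pos_iff.mpr (by positivity)
    show 0 < sinh (k*d) + (ρ-1) * cosh (k*h) * sinh (k*(d-h))
    positivity
  have hDlt : D < b^2 := by
    show b^2 - 4*(ρ-1) * cosh (k*d) * sinh (k*h) * sinh (k*(d-h)) < b^2
    have : 0 < 4*(ρ-1) * cosh (k*d) * sinh (k*h) * sinh (k*(d-h)) := by positivity
    linarith
  have hsqlt : Real.sqrt D < b := by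
    have := Real.sqrt_lt_sqrt hD0.le hDlt
    rwa [Real.sqrt_sq hb.le] at this
  have hsqnn : 0 ≤ Real.sqrt D := Real.sqrt_nonneg D
  have hCne : cosh (k*d) ≠ 0 := hC.ne'
  have hDdef : D = b^2 - 4*(ρ-1) * cosh (k*d) * sinh (k*h) * sinh (k*(d-h)) := rfl
  have key : ∀ s : ℝ, s^2 = D →
      (k * (b + s) / (2 * cosh (k*d)))^2 * cosh (k*d)
      - (k * (b + s) / (2 * cosh (k*d))) * k * b
      + k^2 * (ρ-1) * sinh (k*h) * sinh (k*(d-h)) = 0 := by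
    intro s hsD
    set ν : ℝ := k * (b + s) / (2 * cosh (k*d)) with hνdef
    have hν : 2 * cosh (k*d) * ν = k * (b + s) := by
      rw [hνdef]; field_simp
    have key2 : (4 * cosh (k*d)) * (ν^2 * cosh (k*d) - ν * k * b
        + k^2 * (ρ-1) * sinh (k*h) * sinh (k*(d-h))) = 0 := by
      linear_combination (2*cosh (k*d)*ν + k*(b+s) - 2*k*b) * hν + k^2 * hsD + k^2 * hDdef
    have h4 : (4 * cosh (k*d)) ≠ 0 := by positivity
    exact (mul_eq_zero.mp key2).resolve_left h4
  refine ⟨hD0.le, ?_, ?_, ?_, ?_⟩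
  · show 0 < k * (b - Real.sqrt D) / (2 * cosh (k*d))
    apply div_pos (mul_pos hk (by linarith)) (by positivity)
  · show 0 < k * (b + Real.sqrt D) / (2 * cosh (k*d))
    apply div_pos (mul_pos hk (by linarith)) (by positivity)
  · have := key (-Real.sqrt D) (by rw [neg_pow]; simpa using hsq)
    show (k * (b - Real.sqrt D) / (2 * cosh (k*d)))^2 * cosh (k*d)
      - (k * (b - Real.sqrt D) / (2 * cosh (k*d))) * k * b
      + k^2 * (ρ-1) * sinh (k*h) * sinh (k*(d-h)) = 0
    simpa [sub_eq_add_neg] using this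
  · exact key (Real.sqrt D) hsq
end

section
/- Fix k>0, d>0, 0<h<d. The function ρ ↦ ν⁻(ρ) = k·(b(ρ) − √D(ρ))/(2·cosh(kd)), where b(ρ) = sinh(kd) + (ρ−1)·cosh(kh)·sinh(k(d−h)) and D(ρ) = b(ρ)² − 4(ρ−1)·cosh(kd)·sinh(kh)·sinh(k(d−h)), is strictly increasing on (1,∞). -/
set_option maxHeartbeats 1000000


open Real

theorem nu_minus_strictMono (k d h : ℝ) (hk : 0 < k) (hd : 0 < d)
    (hh : 0 < h) (hhd : h < d) :
    StrictMonoOn (fun ρ : ℝ =>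
      k * ((sinh (k*d) + (ρ-1) * cosh (k*h) * sinh (k*(d-h)))
          - Real.sqrt ((sinh (k*d) + (ρ-1) * cosh (k*h) * sinh (k*(d-h)))^2
              - 4*(ρ-1) * cosh (k*d) * sinh (k*h) * sinh (k*(d-h))))
        / (2 * cosh (k*d)))
      (Set.Ioi 1) := by
  intro p hp q hq hpq
  simp only [Set.mem_Ioi] at hp hq
  dsimp only
  set s1 := Real.sinh (k*h) with hs1def
  set s2 := Real.sinh (k*(d-h)) with hs2def
  set c1 := Real.cosh (k*h) with hc1def
  set c2 := Real.cosh (k*(d-h)) with hc2def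
  have hkh : 0 < k*h := mul_pos hk hh
  have hkdh : 0 < k*(d-h) := mul_pos hk (sub_pos.mpr hhd)
  have hs1 : 0 < s1 := by rw [hs1def]; exact Real.sinh_pos_iff.mpr hkh
  have hs2 : 0 < s2 := by rw [hs2def]; exact Real.sinh_pos_iff.mpr hkdh
  have hc1 : 1 ≤ c1 := by rw [hc1def]; exact Real.one_le_cosh _
  have hc2 : 1 ≤ c2 := by rw [hc2def]; exact Real.one_le_cosh _
  have hid : c1^2 - s1^2 = 1 := by
    rw [hc1def, hs1def]; exact Real.cosh_sq_sub_sinh_sq _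
  have hS : Real.sinh (k*d) = s1*c2 + c1*s2 := by
    rw [show k*d = k*h + k*(d-h) by ring, Real.sinh_add, hs1def, hs2def, hc1def, hc2def]
  have hC : Real.cosh (k*d) = c1*c2 + s1*s2 := by
    rw [show k*d = k*h + k*(d-h) by ring, Real.cosh_add, hs1def, hs2def, hc1def, hc2def]
  rw [hS, hC]
  have hCpos : 0 < c1*c2 + s1*s2 := by nlinarith
  have hcpos : 0 < c1*s2 := by nlinarith
  -- key facts for any t
  have key : ∀ t : ℝ,
      0 < (s1*c2 + c1*s2 + t*c1*s2)^2 - 4*t*(c1*c2+s1*s2)*s1*s2 ∧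
      (s1*c2 + c1*s2 + t*c1*s2)*(c1*s2) - 2*(c1*c2+s1*s2)*s1*s2
        < (c1*s2) * Real.sqrt ((s1*c2 + c1*s2 + t*c1*s2)^2 - 4*t*(c1*c2+s1*s2)*s1*s2) := by
    intro t
    have hident : (c1*s2)^2 * ((s1*c2 + c1*s2 + t*c1*s2)^2 - 4*t*(c1*c2+s1*s2)*s1*s2)
        - ((s1*c2 + c1*s2 + t*c1*s2)*(c1*s2) - 2*(c1*c2+s1*s2)*s1*s2)^2
        = 4*(c1*c2+s1*s2)*s1*s2^3*(c1^2 - s1^2) := by ring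
    rw [hid, mul_one] at hident
    have hPpos : 0 < 4*(c1*c2+s1*s2)*s1*s2^3 := by positivity
    have hApos : 0 < (s1*c2 + c1*s2 + t*c1*s2)^2 - 4*t*(c1*c2+s1*s2)*s1*s2 := by
      nlinarith [hident, sq_nonneg ((s1*c2 + c1*s2 + t*c1*s2)*(c1*s2) - 2*(c1*c2+s1*s2)*s1*s2),
        sq_nonneg (c1*s2)]
    refine ⟨hApos, ?_⟩
    set A := (s1*c2 + c1*s2 + t*c1*s2)^2 - 4*t*(c1*c2+s1*s2)*s1*s2 with hAdef
    have hr : (Real.sqrt A)^2 = A := Real.sq_sqrt hApos.le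
    have hr0 : 0 ≤ Real.sqrt A := Real.sqrt_nonneg _
    have habs : ((s1*c2 + c1*s2 + t*c1*s2)*(c1*s2) - 2*(c1*c2+s1*s2)*s1*s2)^2
        < ((c1*s2) * Real.sqrt A)^2 := by
      have hcrA : ((c1*s2) * Real.sqrt A)^2 = (c1*s2)^2 * A := by rw [mul_pow, hr]
      rw [hcrA]; linarith [hident, hPpos]
    exact lt_of_pow_lt_pow_left₀ 2 (mul_nonneg hcpos.le hr0) habs
  obtain ⟨hA1, hk1⟩ := key (p-1)
  obtain ⟨hA2, hk2⟩ := key (q-1)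
  set A1 := (s1*c2 + c1*s2 + (p-1)*c1*s2)^2 - 4*(p-1)*(c1*c2+s1*s2)*s1*s2 with hA1def
  set A2 := (s1*c2 + c1*s2 + (q-1)*c1*s2)^2 - 4*(q-1)*(c1*c2+s1*s2)*s1*s2 with hA2def
  have hr1 : (Real.sqrt A1)^2 = A1 := Real.sq_sqrt hA1.le
  have hr2 : (Real.sqrt A2)^2 = A2 := Real.sq_sqrt hA2.le
  have hr10 : 0 ≤ Real.sqrt A1 := Real.sqrt_nonneg _
  have hr20 : 0 ≤ Real.sqrt A2 := Real.sqrt_nonneg _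
  have hΔ : 0 < q - p := sub_pos.mpr hpq
  have step1 : (Real.sqrt A2)^2 < (Real.sqrt A1 + (q-p)*(c1*s2))^2 := by
    have hmul := mul_lt_mul_of_pos_left hk1 (by linarith : (0:ℝ) < 2*(q-p))
    have expand : (Real.sqrt A1 + (q-p)*(c1*s2))^2
        = A1 + 2*((q-p)*(c1*s2))*Real.sqrt A1 + ((q-p)*(c1*s2))^2 := by
      have := hr1; ring_nf; ring_nf at this; linarith
    rw [hr2, expand]
    linarith [hmul, hA1def, hA2def]
  have step2 : Real.sqrt A2 < Real.sqrt A1 + (q-p)*(c1*s2) := by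
    have hrhs : 0 ≤ Real.sqrt A1 + (q-p)*(c1*s2) := by positivity
    exact lt_of_pow_lt_pow_left₀ 2 hrhs step1
  have hfin : (s1*c2+c1*s2+(p-1)*c1*s2) - Real.sqrt A1
      < (s1*c2+c1*s2+(q-1)*c1*s2) - Real.sqrt A2 := by nlinarith [step2]
  rw [div_lt_div_iff₀ (by positivity) (by positivity)]
  nlinarith [hfin, mul_pos hk hCpos, mul_pos (mul_pos hk hCpos)
    (sub_pos.mpr hfin)]
end

section
/- Fix k>0, d>0, 0<h<d. The function ρ ↦ ν⁺(ρ) = k·(b(ρ) + √D(ρ))/(2·cosh(kd)), with b and D as in the two-layer sloshing quadratic, is strictly increasing on (1,∞). -/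
open Real

/-- Core algebraic lemma: monotonicity of the larger root of the two-layer
sloshing quadratic, in terms of abstract hyperbolic values. -/
lemma nu_core (sp cp sq cq x y : ℝ) (hsp : 0 < sp) (hsq : 0 < sq)
    (hcp0 : 0 < cp) (hcq0 : 0 < cq) (hcp : cp^2 = 1 + sp^2)
    (hx : 1 < x) (hxy : x < y) :
    (sp*cq + cp*sq) + (x-1)*cp*sq +
      Real.sqrt (((sp*cq + cp*sq) + (x-1)*cp*sq)^2
        - 4*(x-1)*(cp*cq + sp*sq)*sp*sq)
    < (sp*cq + cp*sq) + (y-1)*cp*sq +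
      Real.sqrt (((sp*cq + cp*sq) + (y-1)*cp*sq)^2
        - 4*(y-1)*(cp*cq + sp*sq)*sp*sq) := by
  have ht1 : 0 < x - 1 := by linarith
  have ht2 : 0 < y - 1 := by linarith
  have hδ : 0 < y - x := by linarith
  have ha : 0 < cp*cq + sp*sq := by positivity
  set b1 : ℝ := (sp*cq + cp*sq) + (x-1)*cp*sq with hb1
  set b2 : ℝ := (sp*cq + cp*sq) + (y-1)*cp*sq with hb2
  set D1 : ℝ := b1^2 - 4*(x-1)*(cp*cq + sp*sq)*sp*sq with hD1
  set D2 : ℝ := b2^2 - 4*(y-1)*(cp*cq + sp*sq)*sp*sq with hD2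
  -- D positivity: D = (A - tB)^2 + 4 t sq^2 (cp^2 - sp^2)
  have hD1pos : 0 < D1 := by
    have hid : D1 = ((sp*cq + cp*sq) - (x-1)*cp*sq)^2
        + 4*(x-1)*sq^2*(cp^2 - sp^2) := by
      rw [hD1, hb1]; ring
    rw [hid, hcp]
    nlinarith [sq_nonneg ((sp*cq + cp*sq) - (x-1)*cp*sq), mul_pos ht1 (mul_pos hsq hsq)]
  have hD2pos : 0 < D2 := by
    have hid : D2 = ((sp*cq + cp*sq) - (y-1)*cp*sq)^2
        + 4*(y-1)*sq^2*(cp^2 - sp^2) := by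
      rw [hD2, hb2]; ring
    rw [hid, hcp]
    nlinarith [sq_nonneg ((sp*cq + cp*sq) - (y-1)*cp*sq), mul_pos ht2 (mul_pos hsq hsq)]
  set r1 : ℝ := Real.sqrt D1 with hr1
  set r2 : ℝ := Real.sqrt D2 with hr2
  have hr1sq : r1^2 = D1 := Real.sq_sqrt hD1pos.le
  have hr2sq : r2^2 = D2 := Real.sq_sqrt hD2pos.le
  have hr1pos : 0 < r1 := Real.sqrt_pos.mpr hD1pos
  have hr2pos : 0 < r2 := Real.sqrt_pos.mpr hD2pos
  -- derived algebraic facts, stated with b1, b2, r1, r2 as atoms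
  have hcps : cp^2 - sp^2 = 1 := by linarith
  have F1 : (cp*r1)^2 - (2*(cp*cq + sp*sq)*sp - cp*b1)^2
      = 4*(cp*cq + sp*sq)*sp*sq := by
    have h0 : (cp*r1)^2 = cp^2 * D1 := by rw [mul_pow, hr1sq]
    have h1 : cp^2 * D1 - (2*(cp*cq + sp*sq)*sp - cp*b1)^2
        = 4*(cp*cq + sp*sq)*sp*sq*(cp^2 - sp^2) := by
      rw [hD1, hb1]; ring
    rw [hcps, mul_one] at h1
    linarith [h0, h1]
  have F2 : b2 = b1 + (y-x)*(cp*sq) := by rw [hb1, hb2]; ring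
  have F3 : r2^2 - (r1 - (y-x)*(cp*sq))^2
      = 2*(y-x)*(cp*sq*b1 + cp*sq*r1 - 2*(cp*cq + sp*sq)*sp*sq) := by
    have h1 : r2^2 = b2^2 - 4*(y-1)*(cp*cq + sp*sq)*sp*sq := by rw [hr2sq, hD2]
    have h2 : r1^2 = b1^2 - 4*(x-1)*(cp*cq + sp*sq)*sp*sq := by rw [hr1sq, hD1]
    rw [hb1] at h2
    rw [hb2] at h1
    linear_combination h1 - h2
  -- forget the definitions, keep only atoms and derived facts
  clear_value b1 b2 D1 D2 r1 r2
  clear hb1 hb2 hD1 hD2 hr1 hr2 hr1sq hr2sq hx hxy ht1 ht2 hcp hcps hD1pos hD2pos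
  -- key inequality : cp * b1 + cp * r1 > 2 a sp
  have hkey : 2*(cp*cq + sp*sq)*sp < cp*b1 + cp*r1 := by
    rcases le_or_gt (2*(cp*cq + sp*sq)*sp - cp*b1) 0 with hc | hc
    · linarith [mul_pos hcp0 hr1pos]
    · have hpos4 : 0 < 4*(cp*cq + sp*sq)*sp*sq := by positivity
      have hMu : (2*(cp*cq + sp*sq)*sp - cp*b1)^2 < (cp*r1)^2 := by linarith
      have := lt_of_pow_lt_pow_left₀ 2 (mul_pos hcp0 hr1pos).le hMu
      linarith
  -- conclude
  have hgoal : b1 + r1 < b2 + r2 := by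
    rcases le_or_gt (r1 - (y-x)*(cp*sq)) 0 with hc | hc
    · linarith [hr2pos, F2, mul_pos hcp0 hsq]
    · have hkey2 : 2*(cp*cq + sp*sq)*sp*sq < cp*sq*b1 + cp*sq*r1 := by
        linarith [mul_lt_mul_of_pos_left hkey hsq]
      have hE : 0 < (y-x)*(cp*sq*b1 + cp*sq*r1 - 2*(cp*cq + sp*sq)*sp*sq) :=
        mul_pos hδ (by linarith)
      have hMu : (r1 - (y-x)*(cp*sq))^2 < r2^2 := by linarith [F3, hE]
      have := lt_of_pow_lt_pow_left₀ 2 hr2pos.le hMu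
      linarith [F2, this]
  exact hgoal

theorem nu_plus_strictMono (k d h : ℝ) (hk : 0 < k) (hd : 0 < d)
    (hh : 0 < h) (hhd : h < d) :
    StrictMonoOn (fun ρ : ℝ =>
      k * ((sinh (k*d) + (ρ-1) * cosh (k*h) * sinh (k*(d-h)))
          + Real.sqrt ((sinh (k*d) + (ρ-1) * cosh (k*h) * sinh (k*(d-h)))^2
              - 4*(ρ-1) * cosh (k*d) * sinh (k*h) * sinh (k*(d-h))))
        / (2 * cosh (k*d)))
      (Set.Ioi 1) := by
  intro x hx y hy hxy
  simp only [Set.mem_Ioi] at hx hy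
  dsimp only
  have hkd : k * d = k*h + k*(d-h) := by ring
  rw [hkd, Real.sinh_add, Real.cosh_add]
  have hsp : 0 < Real.sinh (k*h) := Real.sinh_pos_iff.mpr (by positivity)
  have hsq : 0 < Real.sinh (k*(d-h)) := Real.sinh_pos_iff.mpr (by nlinarith)
  have hcp0 : 0 < Real.cosh (k*h) := Real.cosh_pos _
  have hcq0 : 0 < Real.cosh (k*(d-h)) := Real.cosh_pos _
  have hcp : (Real.cosh (k*h))^2 = 1 + (Real.sinh (k*h))^2 := by
    rw [Real.cosh_sq']
  have hcore := nu_core (Real.sinh (k*h)) (Real.cosh (k*h))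
    (Real.sinh (k*(d-h))) (Real.cosh (k*(d-h))) x y hsp hsq hcp0 hcq0 hcp hx hxy
  have hden : 0 < 2 * (Real.cosh (k*h) * Real.cosh (k*(d-h))
      + Real.sinh (k*h) * Real.sinh (k*(d-h))) := by positivity
  exact (div_lt_div_iff_of_pos_right hden).mpr (mul_lt_mul_of_pos_left hcore hk)
end

section
/- Fix k>0, d>0, 0<h<d. As ρ → 1⁺, ν⁻(ρ) → 0, and as ρ → ∞, ν⁻(ρ) → k·tanh(kh); moreover ν⁻(ρ) ∈ (0, k·tanh(kh)) for all ρ > 1. -/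
open Real Filter

private lemma keyD (A C S H s t : ℝ) (hC : C ≠ 0) (hS : S = A*C - H*s) :
    (A + t*C*S)^2 - 4*t*H*s*S = ((A + t*C*S) - 2*H*s/C)^2 + 4*H*s*S/C^2 := by
  subst hS; field_simp; ring

private lemma Dpos (A C S H s : ℝ) (hC : 0 < C) (hS0 : 0 < S) (hH : 0 < H)
    (hs : 0 < s) (hS : S = A*C - H*s) (t : ℝ) :
    0 < (A + t*C*S)^2 - 4*t*H*s*S := by
  rw [keyD A C S H s t hC.ne' hS]
  have h1 : 0 < 4*H*s*S/C^2 := by positivity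
  nlinarith [sq_nonneg ((A + t*C*S) - 2*H*s/C)]

private lemma range' (k A C S H s : ℝ) (hk : 0 < k) (hA : 0 < A) (hC : 0 < C)
    (hS0 : 0 < S) (hH : 0 < H) (hs : 0 < s) (hS : S = A*C - H*s)
    (t : ℝ) (ht : 0 < t) :
    k * ((A + t*C*S) - Real.sqrt ((A + t*C*S)^2 - 4*t*H*s*S)) / (2*H)
      ∈ Set.Ioo 0 (k * (s/C)) := by
  have hDp := Dpos A C S H s hC hS0 hH hs hS t
  have hbpos : 0 < A + t*C*S := by positivity
  have hsqlt : Real.sqrt ((A + t*C*S)^2 - 4*t*H*s*S) < A + t*C*S := by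
    rw [Real.sqrt_lt' hbpos]
    have : 0 < 4*t*H*s*S := by positivity
    linarith
  constructor
  · have h1 : 0 < (A + t*C*S) - Real.sqrt ((A + t*C*S)^2 - 4*t*H*s*S) := by linarith
    positivity
  · have hgt : (A + t*C*S) - 2*H*s/C < Real.sqrt ((A + t*C*S)^2 - 4*t*H*s*S) := by
      have h1 : ((A + t*C*S) - 2*H*s/C)^2 < (A + t*C*S)^2 - 4*t*H*s*S := by
        rw [keyD A C S H s t hC.ne' hS]
        have : 0 < 4*H*s*S/C^2 := by positivity
        linarith
      calc (A + t*C*S) - 2*H*s/C ≤ |(A + t*C*S) - 2*H*s/C| := le_abs_self _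
        _ = Real.sqrt (((A + t*C*S) - 2*H*s/C)^2) := (Real.sqrt_sq_eq_abs _).symm
        _ < _ := Real.sqrt_lt_sqrt (sq_nonneg _) h1
    rw [div_lt_iff₀ (by positivity)]
    have h2 : (A + t*C*S) - Real.sqrt ((A + t*C*S)^2 - 4*t*H*s*S) < 2*H*s/C := by
      linarith
    calc k * ((A + t*C*S) - Real.sqrt ((A + t*C*S)^2 - 4*t*H*s*S))
        < k * (2*H*s/C) := mul_lt_mul_of_pos_left h2 hk
      _ = k * (s/C) * (2*H) := by ring

set_option maxHeartbeats 1000000 in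
private lemma limit2' (k A C S H s : ℝ) (hk : 0 < k) (hA : 0 < A) (hC : 0 < C)
    (hS0 : 0 < S) (hH : 0 < H) (hs : 0 < s) (hS : S = A*C - H*s) :
    Tendsto (fun ρ : ℝ => k * ((A + (ρ-1)*C*S)
        - Real.sqrt ((A + (ρ-1)*C*S)^2 - 4*(ρ-1)*H*s*S)) / (2*H))
      atTop (nhds (k * (s/C))) := by
  have hDpos := Dpos A C S H s hC hS0 hH hs hS
  have hu : Tendsto (fun ρ : ℝ => (ρ - 1)⁻¹) atTop (nhds 0) :=
    (tendsto_atTop_add_const_right atTop (-1) tendsto_id).inv_tendsto_atTop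
  have hφcont : ContinuousAt (fun u : ℝ =>
      2*k*s*S / (A*u + C*S + Real.sqrt ((A*u + C*S)^2 - 4*H*s*S*u))) 0 := by
    apply ContinuousAt.div continuousAt_const (by fun_prop)
    show A*0 + C*S + Real.sqrt ((A*0 + C*S)^2 - 4*H*s*S*0) ≠ 0
    rw [mul_zero, zero_add, mul_zero, sub_zero, Real.sqrt_sq (by positivity)]
    positivity
  have hφ0 : 2*k*s*S / (A*0 + C*S + Real.sqrt ((A*0 + C*S)^2 - 4*H*s*S*0))
      = k * (s/C) := by
    rw [mul_zero, zero_add, mul_zero, sub_zero, Real.sqrt_sq (by positivity)]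
    field_simp; ring
  have hcomp := hφcont.tendsto.comp hu
  rw [hφ0] at hcomp
  apply Tendsto.congr' _ hcomp
  filter_upwards [eventually_gt_atTop (1:ℝ)] with ρ hρ
  have ht : 0 < ρ - 1 := by linarith
  show 2*k*s*S / (A*(ρ-1)⁻¹ + C*S
      + Real.sqrt ((A*(ρ-1)⁻¹ + C*S)^2 - 4*H*s*S*(ρ-1)⁻¹))
    = k * ((A + (ρ-1)*C*S) - Real.sqrt ((A + (ρ-1)*C*S)^2 - 4*(ρ-1)*H*s*S)) / (2*H)
  have hDp := hDpos (ρ-1)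
  have hinner : (A*(ρ-1)⁻¹ + C*S)^2 - 4*H*s*S*(ρ-1)⁻¹
      = (Real.sqrt ((A + (ρ-1)*C*S)^2 - 4*(ρ-1)*H*s*S) / (ρ-1))^2 := by
    rw [div_pow, Real.sq_sqrt hDp.le]
    field_simp
  rw [hinner, Real.sqrt_sq (by positivity)]
  set q := Real.sqrt ((A + (ρ-1)*C*S)^2 - 4*(ρ-1)*H*s*S) with hq
  have hqnn : 0 ≤ q := Real.sqrt_nonneg _
  have hsq : q^2 = (A + (ρ-1)*C*S)^2 - 4*(ρ-1)*H*s*S := Real.sq_sqrt hDp.le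
  have hbpos : 0 < A + (ρ-1)*C*S := by positivity
  have hbq : 0 < A + (ρ-1)*C*S + q := by linarith
  have hX : 0 < A*(ρ-1)⁻¹ + C*S + q/(ρ-1) := by
    have h1 : 0 < A*(ρ-1)⁻¹ := by positivity
    have h2 : 0 ≤ q/(ρ-1) := div_nonneg hqnn ht.le
    have h3 : 0 < C*S := by positivity
    linarith
  have e1 : 2*k*s*S / (A*(ρ-1)⁻¹ + C*S + q/(ρ-1))
      = 2*k*s*S*(ρ-1) / (A + (ρ-1)*C*S + q) := by
    rw [div_eq_div_iff hX.ne' hbq.ne']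
    have hc : (ρ-1) * (ρ-1)⁻¹ = 1 := mul_inv_cancel₀ ht.ne'
    linear_combination (-(2*k*s*S*(A+q))) * hc
  have e2 : k * ((A + (ρ-1)*C*S) - q) / (2*H)
      = 2*k*s*S*(ρ-1) / (A + (ρ-1)*C*S + q) := by
    rw [div_eq_div_iff (by positivity) hbq.ne']
    linear_combination (-k) * hsq
  rw [e1, e2]

theorem nu_minus_range (k d h : ℝ) (hk : 0 < k) (hd : 0 < d)
    (hh : 0 < h) (hhd : h < d) :
    let νm : ℝ → ℝ := fun ρ =>
      k * ((sinh (k*d) + (ρ-1) * cosh (k*h) * sinh (k*(d-h)))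
          - Real.sqrt ((sinh (k*d) + (ρ-1) * cosh (k*h) * sinh (k*(d-h)))^2
              - 4*(ρ-1) * cosh (k*d) * sinh (k*h) * sinh (k*(d-h))))
        / (2 * cosh (k*d))
    Tendsto νm (nhdsWithin 1 (Set.Ioi 1)) (nhds 0) ∧
      Tendsto νm atTop (nhds (k * tanh (k*h))) ∧
      ∀ ρ : ℝ, 1 < ρ → νm ρ ∈ Set.Ioo 0 (k * tanh (k*h)) := by
  intro νm
  have hApos : 0 < sinh (k*d) := Real.sinh_pos_iff.mpr (by positivity)
  have hspos : 0 < sinh (k*h) := Real.sinh_pos_iff.mpr (by positivity)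
  have hSpos : 0 < sinh (k*(d-h)) := Real.sinh_pos_iff.mpr (by nlinarith)
  have hCpos : (0:ℝ) < cosh (k*h) := Real.cosh_pos _
  have hHpos : (0:ℝ) < cosh (k*d) := Real.cosh_pos _
  have hS : sinh (k*(d-h)) = sinh (k*d) * cosh (k*h) - cosh (k*d) * sinh (k*h) := by
    rw [show k*(d-h) = k*d - k*h by ring, Real.sinh_sub]
  have htanh : tanh (k*h) = sinh (k*h) / cosh (k*h) := Real.tanh_eq_sinh_div_cosh _
  refine ⟨?_, ?_, ?_⟩
  · -- limit at 1⁺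
    have hcont : Continuous νm := by fun_prop
    have hv1 : νm 1 = 0 := by
      show k * ((sinh (k*d) + (1-1) * cosh (k*h) * sinh (k*(d-h)))
          - Real.sqrt ((sinh (k*d) + (1-1) * cosh (k*h) * sinh (k*(d-h)))^2
              - 4*(1-1) * cosh (k*d) * sinh (k*h) * sinh (k*(d-h))))
        / (2 * cosh (k*d)) = 0
      norm_num [Real.sqrt_sq hApos.le]
    have := hcont.continuousAt (x := (1:ℝ))
    rw [ContinuousAt, hv1] at this
    exact this.mono_left nhdsWithin_le_nhds
  · rw [htanh]
    exact limit2' k _ _ _ _ _ hk hApos hCpos hSpos hHpos hspos hS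
  · intro ρ hρ
    rw [htanh]
    exact range' k _ _ _ _ _ hk hApos hCpos hSpos hHpos hspos hS (ρ-1) (by linarith)
end

section
/- Fix k>0, d>0, 0<h<d. As ρ → 1⁺, ν⁺(ρ) → k·tanh(kd), and ν⁺(ρ) → ∞ as ρ → ∞; moreover ν⁺(ρ) > k·tanh(kd) for all ρ > 1. -/
open Real Filter

theorem nu_plus_range (k d h : ℝ) (hk : 0 < k) (hd : 0 < d)
    (hh : 0 < h) (hhd : h < d) :
    let νp : ℝ → ℝ := fun ρ =>
      k * ((sinh (k*d) + (ρ-1) * cosh (k*h) * sinh (k*(d-h)))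
          + Real.sqrt ((sinh (k*d) + (ρ-1) * cosh (k*h) * sinh (k*(d-h)))^2
              - 4*(ρ-1) * cosh (k*d) * sinh (k*h) * sinh (k*(d-h))))
        / (2 * cosh (k*d))
    Tendsto νp (nhdsWithin 1 (Set.Ioi 1)) (nhds (k * tanh (k*d))) ∧
      Tendsto νp atTop atTop ∧
      ∀ ρ : ℝ, 1 < ρ → k * tanh (k*d) < νp ρ := by
  intro νp
  have hc : 0 < cosh (k*d) := Real.cosh_pos _
  have hs : 0 < sinh (k*d) := Real.sinh_pos_iff.mpr (by positivity)
  have hsh : 0 < sinh (k*h) := Real.sinh_pos_iff.mpr (by positivity)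
  have hsdh : 0 < sinh (k*(d-h)) := Real.sinh_pos_iff.mpr (by nlinarith)
  have hch : 0 < cosh (k*h) := Real.cosh_pos _
  have hid : sinh (k*d) * cosh (k*h) - cosh (k*d) * sinh (k*h) = sinh (k*(d-h)) := by
    have := Real.sinh_sub (k*d) (k*h)
    have h2 : k*(d-h) = k*d - k*h := by ring
    rw [h2, this]
  have hval : νp 1 = k * tanh (k*d) := by
    simp only [νp]
    rw [Real.tanh_eq_sinh_div_cosh]
    have : ((1:ℝ)-1) = 0 := by ring
    rw [this]
    ring_nf
    rw [Real.sqrt_sq hs.le]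
    field_simp
    ring
  refine ⟨?_, ?_, ?_⟩
  · have hcontν : ContinuousAt νp 1 := by
      apply ContinuousAt.div _ continuousAt_const (by positivity)
      fun_prop
    have := hcontν.tendsto
    rw [hval] at this
    exact this.mono_left nhdsWithin_le_nhds
  · set C := cosh (k*h) * sinh (k*(d-h)) with hC
    have hCpos : 0 < C := by positivity
    have hlin : Tendsto (fun ρ : ℝ => k * C / (2 * cosh (k*d)) * ρ
        + k * (sinh (k*d) - C) / (2 * cosh (k*d))) atTop atTop := by
      apply tendsto_atTop_add_const_right
      exact Tendsto.const_mul_atTop (by positivity) tendsto_id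
    apply tendsto_atTop_mono _ hlin
    intro ρ
    have hsq : 0 ≤ Real.sqrt ((sinh (k*d) + (ρ-1) * cosh (k*h) * sinh (k*(d-h)))^2
        - 4*(ρ-1) * cosh (k*d) * sinh (k*h) * sinh (k*(d-h))) := Real.sqrt_nonneg _
    simp only [νp]
    have heq : k * C / (2 * cosh (k*d)) * ρ + k * (sinh (k*d) - C) / (2 * cosh (k*d))
        = k * (sinh (k*d) + (ρ-1) * cosh (k*h) * sinh (k*(d-h))) / (2 * cosh (k*d)) := by
      rw [hC]; field_simp; ring
    rw [heq, div_le_div_iff₀ (by positivity) (by positivity)]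
    nlinarith [mul_nonneg (mul_nonneg (mul_nonneg hk.le (by norm_num : (0:ℝ) ≤ 2)) hc.le) hsq]
  · intro ρ hρ
    set b : ℝ := sinh (k*d) + (ρ-1) * cosh (k*h) * sinh (k*(d-h)) with hb
    set D : ℝ := b^2 - 4*(ρ-1) * cosh (k*d) * sinh (k*h) * sinh (k*(d-h)) with hD
    set s : ℝ := sinh (k*d)
    set C : ℝ := cosh (k*h) * sinh (k*(d-h)) with hC
    have hkey : (s - (ρ-1)*C)^2 < D := by
      have h1 : D - (s - (ρ-1)*C)^2
          = 4*(ρ-1) * sinh (k*(d-h)) * (s * cosh (k*h) - cosh (k*d) * sinh (k*h)) := by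
        simp only [hD, hb, hC]; ring
      rw [hid] at h1
      nlinarith [mul_pos (mul_pos (sub_pos.mpr hρ) hsdh) hsdh]
    have hsqrt : s - (ρ-1)*C < Real.sqrt D := by
      rcases le_or_gt 0 (s - (ρ-1)*C) with h0 | h0
      · exact (Real.lt_sqrt h0).mpr hkey
      · exact lt_of_lt_of_le h0 (Real.sqrt_nonneg _)
    have h2s : 2 * s < b + Real.sqrt D := by
      simp only [hb, hC] at hsqrt ⊢
      nlinarith
    show k * tanh (k*d) < k * (b + Real.sqrt D) / (2 * cosh (k*d))
    rw [Real.tanh_eq_sinh_div_cosh, ← mul_div_assoc,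
      div_lt_div_iff₀ (by positivity) (by positivity)]
    nlinarith [mul_pos (mul_pos hk hc) (sub_pos.mpr h2s)]
end

section
/- For every k>0, d>0, 0<h<d and ρ>1, the strict inequalities ν⁻ < k·tanh(kd) < ν⁺ hold, where ν± are the two roots of the two-layer sloshing quadratic. -/
open Real

theorem nu_interlacing (k d h ρ : ℝ) (hk : 0 < k) (hd : 0 < d)
    (hh : 0 < h) (hhd : h < d) (hρ : 1 < ρ) :
    let b : ℝ := sinh (k*d) + (ρ-1) * cosh (k*h) * sinh (k*(d-h))
    let D : ℝ := b^2 - 4*(ρ-1) * cosh (k*d) * sinh (k*h) * sinh (k*(d-h))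
    k * (b - Real.sqrt D) / (2 * cosh (k*d)) < k * tanh (k*d) ∧
      k * tanh (k*d) < k * (b + Real.sqrt D) / (2 * cosh (k*d)) := by
  intro b D
  have hsd : 0 < Real.sinh (k*(d-h)) := Real.sinh_pos_iff.2 (by nlinarith)
  have hC : 0 < Real.cosh (k*d) := Real.cosh_pos _
  set s := Real.sinh (k*d) with hs
  have hid : Real.sinh (k*(d-h)) = s * Real.cosh (k*h) - Real.cosh (k*d) * Real.sinh (k*h) := by
    rw [show k*(d-h) = k*d - k*h by ring, Real.sinh_sub]
  have hDgt : (2*s - b)^2 < D := by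
    have hkey : D - (2*s-b)^2 = 4*(ρ-1)*(Real.sinh (k*(d-h)))^2 := by
      simp only [b, D]
      rw [hid]; ring
    have hρ' : (0:ℝ) < ρ - 1 := by linarith
    have hp : 0 < 4*(ρ-1)*(Real.sinh (k*(d-h)))^2 :=
      mul_pos (mul_pos (by norm_num) hρ') (pow_pos hsd 2)
    linarith
  have habs : |2*s - b| < Real.sqrt D := by
    rw [← Real.sqrt_sq_eq_abs]
    exact Real.sqrt_lt_sqrt (sq_nonneg _) hDgt
  have h1 : b - Real.sqrt D < 2*s := by
    have := neg_lt_of_abs_lt habs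
    linarith
  have h2 : 2*s < b + Real.sqrt D := by
    have := lt_of_abs_lt habs
    linarith
  rw [Real.tanh_eq_sinh_div_cosh]
  have hkC : 0 < k * Real.cosh (k*d) := mul_pos hk hC
  constructor
  · rw [← mul_div_assoc, div_lt_div_iff₀ (by positivity) hC, ← hs]
    nlinarith [mul_lt_mul_of_pos_left h1 hkC]
  · rw [← mul_div_assoc, div_lt_div_iff₀ hC (by positivity), ← hs]
    nlinarith [mul_lt_mul_of_pos_left h2 hkC]
end

section
/- Fix d>0, 0<h<d and ρ>1. As k → ∞, ν⁺(k)/k → (ρ+1+|ρ−3|)/4 and ν⁻(k)/k → (ρ+1−|ρ−3|)/4. -/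
open Real Filter

private lemma abs_sinh_le_cosh (x : ℝ) : |Real.sinh x| ≤ Real.cosh x := by
  rw [abs_le]
  constructor
  · nlinarith [Real.cosh_add_sinh x, Real.exp_pos x]
  · nlinarith [Real.cosh_sub_sinh x, Real.exp_pos (-x)]

private lemma cosh_ratio_zero (a c : ℝ) (hac : |a| < c) :
    Tendsto (fun k : ℝ => Real.cosh (k*a) / Real.cosh (k*c)) atTop (nhds 0) := by
  have hbound : Tendsto (fun k : ℝ => 2 * Real.exp (k*(|a|-c))) atTop (nhds 0) := by
    have h1 : Tendsto (fun k : ℝ => k*(|a|-c)) atTop atBot :=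
      tendsto_id.atTop_mul_const_of_neg (by linarith)
    have := Real.tendsto_exp_atBot.comp h1
    simpa using this.const_mul 2
  apply tendsto_of_tendsto_of_tendsto_of_le_of_le' tendsto_const_nhds hbound
  · filter_upwards with k
    positivity
  · filter_upwards [eventually_ge_atTop (0:ℝ)] with k hk
    have h1 : Real.cosh (k*a) ≤ Real.exp (k*|a|) := by
      have : Real.cosh (k*a) = Real.cosh (k*|a|) := by
        rcases abs_cases a with ⟨h, _⟩ | ⟨h, _⟩
        · rw [h]
        · rw [h, mul_neg, Real.cosh_neg]
      rw [this, Real.cosh_eq]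
      have h0 : (0:ℝ) ≤ k*|a| := mul_nonneg hk (abs_nonneg a)
      have : Real.exp (-(k*|a|)) ≤ Real.exp (k*|a|) :=
        Real.exp_le_exp.mpr (by linarith)
      linarith
    have h2 : Real.exp (k*c) / 2 ≤ Real.cosh (k*c) := by
      rw [Real.cosh_eq]
      have := Real.exp_pos (-(k*c))
      linarith
    have hc : (0:ℝ) < Real.cosh (k*c) := Real.cosh_pos _
    rw [div_le_iff₀ hc]
    calc Real.cosh (k*a) ≤ Real.exp (k*|a|) := h1
      _ = 2 * Real.exp (k*(|a|-c)) * (Real.exp (k*c) / 2) := by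
          rw [show (2:ℝ) * Real.exp (k*(|a|-c)) * (Real.exp (k*c)/2)
            = Real.exp (k*(|a|-c)) * Real.exp (k*c) by ring, ← Real.exp_add]
          congr 1
          ring
      _ ≤ 2 * Real.exp (k*(|a|-c)) * Real.cosh (k*c) := by
          have : (0:ℝ) < 2 * Real.exp (k*(|a|-c)) := by positivity
          nlinarith
  
private lemma sinh_ratio_zero (a c : ℝ) (hac : |a| < c) :
    Tendsto (fun k : ℝ => Real.sinh (k*a) / Real.cosh (k*c)) atTop (nhds 0) := by
  apply squeeze_zero_norm _ (cosh_ratio_zero a c hac)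
  intro k
  have hc : (0:ℝ) < Real.cosh (k*c) := Real.cosh_pos _
  rw [Real.norm_eq_abs, abs_div, abs_of_pos hc]
  gcongr
  exact abs_sinh_le_cosh _

private lemma tanh_ratio_one (c : ℝ) (hc : 0 < c) :
    Tendsto (fun k : ℝ => Real.sinh (k*c) / Real.cosh (k*c)) atTop (nhds 1) := by
  have key : ∀ k : ℝ, Real.sinh (k*c) / Real.cosh (k*c)
      = 1 - Real.exp (-(k*c)) / Real.cosh (k*c) := by
    intro k
    have hpos : (0:ℝ) < Real.cosh (k*c) := Real.cosh_pos _
    field_simp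
    linarith [Real.cosh_sub_sinh (k*c)]
  simp only [key]
  have h0 : Tendsto (fun k : ℝ => Real.exp (-(k*c)) / Real.cosh (k*c)) atTop (nhds 0) := by
    apply squeeze_zero_norm _ (Real.tendsto_exp_atBot.comp
      (tendsto_id.atTop_mul_const_of_neg (neg_neg_iff_pos.mpr hc) : Tendsto (fun k:ℝ => k * (-c)) atTop atBot))
    intro k
    have hpos : (0:ℝ) < Real.cosh (k*c) := Real.cosh_pos _
    have h1 : (1:ℝ) ≤ Real.cosh (k*c) := Real.one_le_cosh _
    rw [Real.norm_eq_abs, abs_div, abs_of_pos hpos, abs_of_pos (Real.exp_pos _)]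
    simp only [Function.comp_apply, mul_neg]
    exact div_le_of_le_mul₀ (by nlinarith [Real.exp_pos (-(k*c))]) (le_of_lt (Real.exp_pos _)) (by nlinarith [Real.exp_pos (-(k*c))])
  simpa using tendsto_const_nhds.sub h0

theorem nu_asymptotics (d h ρ : ℝ) (hd : 0 < d) (hh : 0 < h) (hhd : h < d)
    (hρ : 1 < ρ) :
    let b : ℝ → ℝ := fun k => sinh (k*d) + (ρ-1) * cosh (k*h) * sinh (k*(d-h))
    let D : ℝ → ℝ := fun k =>
      (b k)^2 - 4*(ρ-1) * cosh (k*d) * sinh (k*h) * sinh (k*(d-h))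
    Tendsto (fun k : ℝ => (k * (b k + Real.sqrt (D k)) / (2 * cosh (k*d))) / k)
        atTop (nhds ((ρ + 1 + |ρ - 3|) / 4)) ∧
      Tendsto (fun k : ℝ => (k * (b k - Real.sqrt (D k)) / (2 * cosh (k*d))) / k)
        atTop (nhds ((ρ + 1 - |ρ - 3|) / 4)) := by
  intro b D
  have habs : |d - 2*h| < d := by
    rw [abs_lt]; constructor <;> linarith
  have hcosh : ∀ k : ℝ, (0:ℝ) < cosh (k*d) := fun k => Real.cosh_pos _
  have hne : ∀ k : ℝ, cosh (k*d) ≠ 0 := fun k => (hcosh k).ne'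
  -- identity 1: cosh(kh)·sinh(k(d−h)) = (sinh(kd)+sinh(k(d−2h)))/2
  have hid1 : ∀ k : ℝ, cosh (k*h) * sinh (k*(d-h))
      = (sinh (k*d) + sinh (k*(d-2*h))) / 2 := by
    intro k
    rw [show k*d = k*h + k*(d-h) by ring, show k*(d-2*h) = k*(d-h) - k*h by ring,
      Real.sinh_add, Real.sinh_sub]
    ring
  -- identity 2: sinh(kh)·sinh(k(d−h)) = (cosh(kd) − cosh(k(d−2h)))/2
  have hid2 : ∀ k : ℝ, sinh (k*h) * sinh (k*(d-h))
      = (cosh (k*d) - cosh (k*(d-2*h))) / 2 := by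
    intro k
    rw [show k*d = k*h + k*(d-h) by ring, show k*(d-2*h) = k*(d-h) - k*h by ring,
      Real.cosh_add, Real.cosh_sub]
    ring
  have h1 : Tendsto (fun k : ℝ => sinh (k*d) / cosh (k*d)) atTop (nhds 1) :=
    tanh_ratio_one d hd
  have h2 : Tendsto (fun k : ℝ => sinh (k*(d-2*h)) / cosh (k*d)) atTop (nhds 0) :=
    sinh_ratio_zero _ _ habs
  have h3 : Tendsto (fun k : ℝ => cosh (k*(d-2*h)) / cosh (k*d)) atTop (nhds 0) :=
    cosh_ratio_zero _ _ habs
  -- limit of b k / cosh(kd)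
  have hF1 : Tendsto (fun k : ℝ => b k / cosh (k*d)) atTop (nhds ((ρ+1)/2)) := by
    have key : ∀ k : ℝ, b k / cosh (k*d)
        = sinh (k*d) / cosh (k*d)
          + (ρ-1)/2 * (sinh (k*d) / cosh (k*d) + sinh (k*(d-2*h)) / cosh (k*d)) := by
      intro k
      simp only [b]
      rw [mul_assoc, hid1 k]
      field_simp
    simp only [key]
    have := h1.add ((h1.add h2).const_mul ((ρ-1)/2))
    convert this using 2
    ring
  -- limit of D k / cosh(kd)^2
  have hF2 : Tendsto (fun k : ℝ => D k / cosh (k*d)^2) atTop (nhds ((ρ-3)^2/4)) := by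
    have key : ∀ k : ℝ, D k / cosh (k*d)^2
        = (b k / cosh (k*d))^2
          - 2*(ρ-1) * (1 - cosh (k*(d-2*h)) / cosh (k*d)) := by
      intro k
      simp only [D]
      rw [show 4*(ρ-1) * cosh (k*d) * sinh (k*h) * sinh (k*(d-h))
          = 4*(ρ-1) * cosh (k*d) * (sinh (k*h) * sinh (k*(d-h))) by ring, hid2 k]
      field_simp
      ring
    simp only [key]
    have := (hF1.pow 2).sub (((tendsto_const_nhds : Tendsto (fun _ : ℝ => (1:ℝ)) atTop (nhds 1)).sub h3).const_mul (2*(ρ-1)))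
    convert this using 2
    ring
  -- limit of sqrt(D k)/cosh(kd)
  have hG : Tendsto (fun k : ℝ => Real.sqrt (D k) / cosh (k*d)) atTop
      (nhds (|ρ-3|/2)) := by
    have key : ∀ k : ℝ, Real.sqrt (D k) / cosh (k*d)
        = Real.sqrt (D k / cosh (k*d)^2) := by
      intro k
      rw [show D k / cosh (k*d)^2 = ((cosh (k*d))⁻¹)^2 * D k by
        field_simp]
      rw [Real.sqrt_mul (sq_nonneg _), Real.sqrt_sq (inv_nonneg.mpr (hcosh k).le)]
      field_simp
    simp only [key]
    have hval : Real.sqrt ((ρ-3)^2/4) = |ρ-3|/2 := by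
      rw [show (ρ-3)^2/4 = (|ρ-3|/2)^2 by rw [div_pow, sq_abs]; norm_num,
        Real.sqrt_sq (by positivity)]
    rw [← hval]
    exact (Real.continuous_sqrt.tendsto _).comp hF2
  -- assemble
  have hplus : Tendsto (fun k : ℝ => (b k + Real.sqrt (D k)) / (2 * cosh (k*d)))
      atTop (nhds ((ρ + 1 + |ρ - 3|) / 4)) := by
    have key : ∀ k : ℝ, (b k + Real.sqrt (D k)) / (2 * cosh (k*d))
        = (b k / cosh (k*d) + Real.sqrt (D k) / cosh (k*d)) / 2 := by
      intro k; rw [← add_div (b k) (Real.sqrt (D k)) (cosh (k*d)), div_div, mul_comm]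
    simp only [key]
    have := (hF1.add hG).div_const 2
    convert this using 2
    ring
  have hminus : Tendsto (fun k : ℝ => (b k - Real.sqrt (D k)) / (2 * cosh (k*d)))
      atTop (nhds ((ρ + 1 - |ρ - 3|) / 4)) := by
    have key : ∀ k : ℝ, (b k - Real.sqrt (D k)) / (2 * cosh (k*d))
        = (b k / cosh (k*d) - Real.sqrt (D k) / cosh (k*d)) / 2 := by
      intro k; rw [div_sub_div_same, div_div, mul_comm]
    simp only [key]
    have := (hF1.sub hG).div_const 2
    convert this using 2
    ring
  constructor
  · apply hplus.congr'
    filter_upwards [eventually_ge_atTop (1:ℝ)] with k hk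
    have hk0 : k ≠ 0 := by positivity
    field_simp
  · apply hminus.congr'
    filter_upwards [eventually_ge_atTop (1:ℝ)] with k hk
    have hk0 : k ≠ 0 := by positivity
    field_simp
end

section
/- Under the hypotheses of the preceding reduction (i.e., (ρ−1)·sinh(k₁h)·sinh(k₁(d−h)) = (ν_N·ν₁/k₁²)·cosh(k₁d) and (ρ−1)·cosh(k₁h)·sinh(k₁(d−h)) = ((ν_N+ν₁)/k₁)·cosh(k₁d) − sinh(k₁d), with ρ>1, 0<h<d, k₁>0, ν₁,ν_N>0), one has tanh(k₁h) = ν_N·ν₁ / (k₁·(ν_N + ν₁ − ν₁^W)), where ν₁^W = k₁·tanh(k₁d). Consequently, if 0 < ν_N·ν₁/(k₁·(ν_N+ν₁−ν₁^W)) < tanh(k₁d), then h is uniquely determined as h = (1/k₁)·artanh(ν_N·ν₁/(k₁·(ν_N+ν₁−ν₁^W))). -/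
open Real

theorem interface_depth_recovery (k₁ d h ρ ν₁ νN : ℝ) (hk : 0 < k₁) (hd : 0 < d)
    (hh : 0 < h) (hhd : h < d) (hρ : 1 < ρ) (hν₁ : 0 < ν₁) (hνN : 0 < νN)
    (heq1 : (ρ-1) * sinh (k₁*h) * sinh (k₁*(d-h))
      = (νN * ν₁ / k₁^2) * cosh (k₁*d))
    (heq2 : (ρ-1) * cosh (k₁*h) * sinh (k₁*(d-h))
      = ((νN + ν₁) / k₁) * cosh (k₁*d) - sinh (k₁*d)) :
    tanh (k₁*h) = νN * ν₁ / (k₁ * (νN + ν₁ - k₁ * tanh (k₁*d))) ∧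
      (0 < νN * ν₁ / (k₁ * (νN + ν₁ - k₁ * tanh (k₁*d))) →
        νN * ν₁ / (k₁ * (νN + ν₁ - k₁ * tanh (k₁*d))) < tanh (k₁*d) →
        h = (1/k₁) * ((1/2) * Real.log ((1 + νN * ν₁ / (k₁ * (νN + ν₁ - k₁ * tanh (k₁*d)))) / (1 - νN * ν₁ / (k₁ * (νN + ν₁ - k₁ * tanh (k₁*d))))))) := by
  have hC : 0 < cosh (k₁*d) := Real.cosh_pos (k₁*d)
  have hCh : 0 < cosh (k₁*h) := Real.cosh_pos (k₁*h)
  have hS2 : 0 < sinh (k₁*(d-h)) := by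
    have : 0 < k₁*(d-h) := by nlinarith
    exact Real.sinh_pos_iff.2 this
  have hρ1 : 0 < ρ - 1 := by linarith
  have hk' : k₁ ≠ 0 := hk.ne'
  have hRHS2 : 0 < ((νN + ν₁) / k₁) * cosh (k₁*d) - sinh (k₁*d) := by
    rw [← heq2]; positivity
  have hD : 0 < νN + ν₁ - k₁ * tanh (k₁*d) := by
    rw [tanh_eq_sinh_div_cosh, sub_pos]
    have h0 : sinh (k₁*d) < (νN + ν₁) * cosh (k₁*d) / k₁ := by
      have h' := hRHS2; rw [div_mul_eq_mul_div] at h'; linarith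
    have h1 : sinh (k₁*d) / cosh (k₁*d) < (νN + ν₁) / k₁ := by
      rw [div_lt_div_iff₀ hC hk]
      have := (lt_div_iff₀ hk).mp h0; linarith
    calc k₁ * (sinh (k₁*d) / cosh (k₁*d)) < k₁ * ((νN + ν₁) / k₁) :=
          mul_lt_mul_of_pos_left h1 hk
      _ = νN + ν₁ := by field_simp
  have hDenpos : 0 < k₁ * (νN + ν₁ - k₁ * tanh (k₁*d)) := mul_pos hk hD
  have key : tanh (k₁*h) = νN * ν₁ / (k₁ * (νN + ν₁ - k₁ * tanh (k₁*d))) := by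
    rw [tanh_eq_sinh_div_cosh] at hDenpos ⊢
    rw [tanh_eq_sinh_div_cosh, div_eq_div_iff hCh.ne' hDenpos.ne']
    field_simp at heq1 heq2 ⊢
    linear_combination cosh (k₁*h) * heq1 - k₁ * sinh (k₁*h) * heq2
  refine ⟨key, fun hpos hlt => ?_⟩
  set T := νN * ν₁ / (k₁ * (νN + ν₁ - k₁ * tanh (k₁*d))) with hT
  have hlog : (1 + T) / (1 - T) = Real.exp (2 * (k₁ * h)) := by
    rw [← key, tanh_eq_sinh_div_cosh, sinh_eq, cosh_eq]
    set x := k₁ * h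
    have he : (0:ℝ) < Real.exp x + Real.exp (-x) := by positivity
    have hmul : Real.exp x * Real.exp (-x) = 1 := by
      rw [← Real.exp_add]; simp
    have h2x : Real.exp (2*x) = Real.exp x * Real.exp x := by
      rw [← Real.exp_add]; ring_nf
    have hx := Real.exp_pos x
    have hnx := Real.exp_pos (-x)
    field_simp
    rw [mul_comm x 2, h2x]; nlinarith [hmul]
  rw [hlog, Real.log_exp]; field_simp
end

section
/- With U defined as above and the same hypotheses (0 < k₁ < k_N, 0 < ν_j < ν_j^W = k_j·tanh(k_jd) for j=1,N), one has U(h) = (d−h)·(ν_N^W − ν_N)·(ν₁^W − ν₁)·[ν₁·k_N/k₁ − ν_N·k₁/k_N]·cosh(k_Nd)·cosh(k₁d) + o(d−h) as h → d⁻. -/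
open Real Filter Asymptotics

theorem U_asymptotics_at_d (k₁ kN d ν₁ νN : ℝ) (hk₁ : 0 < k₁) (hkN : k₁ < kN)
    (hd : 0 < d) (hν₁ : 0 < ν₁) (hν₁W : ν₁ < k₁ * tanh (k₁*d))
    (hνN : 0 < νN) (hνNW : νN < kN * tanh (kN*d)) :
    let U : ℝ → ℝ := fun h =>
      (ν₁/k₁) * (k₁ * tanh (k₁*d) - ν₁) * cosh (k₁*d) * sinh (kN*(d-h))
          * (kN * sinh (kN*h) - νN * cosh (kN*h))
        - (νN/kN) * (kN * tanh (kN*d) - νN) * cosh (kN*d) * sinh (k₁*(d-h))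
          * (k₁ * sinh (k₁*h) - ν₁ * cosh (k₁*h))
    let C : ℝ := (kN * tanh (kN*d) - νN) * (k₁ * tanh (k₁*d) - ν₁)
        * (ν₁ * kN / k₁ - νN * k₁ / kN) * cosh (kN*d) * cosh (k₁*d)
    (fun h => U h - (d - h) * C) =o[nhdsWithin d (Set.Iio d)] (fun h => d - h) := by
  intro U C
  have hk1' : k₁ ≠ 0 := hk₁.ne'
  have hkN0 : (0:ℝ) < kN := hk₁.trans hkN
  have hkN' : kN ≠ 0 := hkN0.ne'
  have hc1 : Real.cosh (k₁*d) ≠ 0 := (Real.cosh_pos _).ne'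
  have hcN : Real.cosh (kN*d) ≠ 0 := (Real.cosh_pos _).ne'
  have hU : HasDerivAt U (-C) d := by
    have h1 : HasDerivAt (fun h => Real.sinh (kN*(d-h)))
        (Real.cosh (kN*(d-d)) * (kN*(0-1))) d :=
      (Real.hasDerivAt_sinh _).comp d
        (((hasDerivAt_const d d).sub (hasDerivAt_id d)).const_mul kN)
    have h1' : HasDerivAt (fun h => Real.sinh (k₁*(d-h)))
        (Real.cosh (k₁*(d-d)) * (k₁*(0-1))) d :=
      (Real.hasDerivAt_sinh _).comp d
        (((hasDerivAt_const d d).sub (hasDerivAt_id d)).const_mul k₁)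
    have h2 : HasDerivAt (fun h => kN * Real.sinh (kN*h) - νN * Real.cosh (kN*h))
        (kN * (Real.cosh (kN*d) * (kN*1)) - νN * (Real.sinh (kN*d) * (kN*1))) d := by
      exact (((Real.hasDerivAt_sinh _).comp d ((hasDerivAt_id d).const_mul kN)).const_mul kN).sub
        (((Real.hasDerivAt_cosh _).comp d ((hasDerivAt_id d).const_mul kN)).const_mul νN)
    have h2' : HasDerivAt (fun h => k₁ * Real.sinh (k₁*h) - ν₁ * Real.cosh (k₁*h))
        (k₁ * (Real.cosh (k₁*d) * (k₁*1)) - ν₁ * (Real.sinh (k₁*d) * (k₁*1))) d := by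
      exact (((Real.hasDerivAt_sinh _).comp d ((hasDerivAt_id d).const_mul k₁)).const_mul k₁).sub
        (((Real.hasDerivAt_cosh _).comp d ((hasDerivAt_id d).const_mul k₁)).const_mul ν₁)
    have hmain := ((h1.const_mul ((ν₁/k₁) * (k₁ * tanh (k₁*d) - ν₁) * cosh (k₁*d))).mul h2).sub
      ((h1'.const_mul ((νN/kN) * (kN * tanh (kN*d) - νN) * cosh (kN*d))).mul h2')
    refine hmain.congr_deriv ?_
    simp only [C, sub_self, mul_zero, Real.cosh_zero, Real.sinh_zero,
      Real.tanh_eq_sinh_div_cosh]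
    field_simp
    ring
  have hUd : U d = 0 := by simp [U]
  have h0 := (hasDerivAt_iff_isLittleO.mp hU).mono (nhdsWithin_le_nhds (s := Set.Iio d))
  have : (fun h => U h - (d - h) * C) =o[nhdsWithin d (Set.Iio d)] (fun h => h - d) := by
    refine h0.congr' ?_ (Eventually.of_forall fun h => rfl)
    filter_upwards with h
    simp [hUd]; ring
  simpa [neg_sub] using this.neg_right
end

section
/- Let 0 < k₁ < k_N and d > 0. The function z ↦ tanh(z)/z is strictly decreasing on (0,∞); consequently, if ν₁·k_N/k₁ ≤ ν_N·k₁/k_N with ν₁, ν_N > 0, then ν_N^W·ν₁ − ν_N·ν₁^W ≤ ν_N·k₁²·d·[tanh(k_Nd)/(k_Nd) − tanh(k₁d)/(k₁d)] < 0, where ν_j^W = k_j·tanh(k_jd). -/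
open Real

lemma hasDerivAt_tanh' (x : ℝ) : HasDerivAt Real.tanh (1 / Real.cosh x ^ 2) x := by
  have h := (Real.hasDerivAt_sinh x).div (Real.hasDerivAt_cosh x) (Real.cosh_pos x).ne'
  have hnum : (Real.cosh x * Real.cosh x - Real.sinh x * Real.sinh x) / Real.cosh x ^ 2
      = 1 / Real.cosh x ^ 2 := by
    rw [show Real.cosh x * Real.cosh x - Real.sinh x * Real.sinh x
        = Real.cosh x ^ 2 - Real.sinh x ^ 2 by ring, Real.cosh_sq_sub_sinh_sq]
  have : (fun x => Real.sinh x / Real.cosh x) = Real.tanh := by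
    funext y; rw [Real.tanh_eq_sinh_div_cosh]
  rw [hnum, show (Real.sinh / Real.cosh) = (fun x => Real.sinh x / Real.cosh x) from rfl, this] at h
  exact h

lemma tanhDivDerivNeg {x : ℝ} (hx : 0 < x) :
    HasDerivAt (fun z : ℝ => Real.tanh z / z)
      ((1 / Real.cosh x ^ 2 * x - Real.tanh x * 1) / x ^ 2) x :=
  (hasDerivAt_tanh' x).div (hasDerivAt_id x) hx.ne'

lemma tanh_div_strictAnti : StrictAntiOn (fun z : ℝ => Real.tanh z / z) (Set.Ioi 0) := by
  apply strictAntiOn_of_deriv_neg (convex_Ioi 0)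
  · exact ContinuousOn.div
      (fun x _ => (hasDerivAt_tanh' x).continuousAt.continuousWithinAt)
      continuousOn_id (fun x hx => ne_of_gt hx)
  · intro x hx
    rw [interior_Ioi] at hx; replace hx : 0 < x := hx
    rw [(tanhDivDerivNeg hx).deriv]
    apply div_neg_of_neg_of_pos _ (pow_pos hx 2)
    have hc := Real.cosh_pos x
    have hlt : x < Real.sinh x * Real.cosh x := by
      have h1 : 2 * x < Real.sinh (2 * x) := Real.self_lt_sinh_iff.mpr (by linarith)
      rw [Real.sinh_two_mul] at h1
      linarith
    have : 1 / Real.cosh x ^ 2 * x < Real.tanh x := by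
      rw [Real.tanh_eq_sinh_div_cosh, div_mul_eq_mul_div, div_lt_div_iff₀ (by positivity) hc]
      calc 1 * x * Real.cosh x = x * Real.cosh x := by ring
        _ < Real.sinh x * Real.cosh x * Real.cosh x := by nlinarith
        _ = Real.sinh x * Real.cosh x ^ 2 := by ring
    linarith

theorem tanh_div_antitone_and_ineq (k₁ kN d ν₁ νN : ℝ) (hk₁ : 0 < k₁)
    (hkN : k₁ < kN) (hd : 0 < d) (hν₁ : 0 < ν₁) (hνN : 0 < νN) :
    StrictAntiOn (fun z : ℝ => tanh z / z) (Set.Ioi 0) ∧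
      (ν₁ * kN / k₁ ≤ νN * k₁ / kN →
        (kN * tanh (kN*d)) * ν₁ - νN * (k₁ * tanh (k₁*d))
            ≤ νN * k₁^2 * d * (tanh (kN*d)/(kN*d) - tanh (k₁*d)/(k₁*d)) ∧
          νN * k₁^2 * d * (tanh (kN*d)/(kN*d) - tanh (k₁*d)/(k₁*d)) < 0) := by
  refine ⟨tanh_div_strictAnti, fun h => ?_⟩
  have hkN' : 0 < kN := hk₁.trans hkN
  have hA : tanh (kN*d)/(kN*d) < tanh (k₁*d)/(k₁*d) :=
    tanh_div_strictAnti (by positivity : (0:ℝ) < k₁*d) (by positivity : (0:ℝ) < kN*d)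
      (by nlinarith)
  constructor
  · -- reduce to ν₁ * kN^2 ≤ νN * k₁^2
    have hcoef : ν₁ * kN ^ 2 ≤ νN * k₁ ^ 2 := by
      rw [div_le_div_iff₀ hk₁ hkN'] at h
      nlinarith
    have hApos : 0 < tanh (kN*d)/(kN*d) := by
      apply div_pos _ (by positivity)
      rw [Real.tanh_eq_sinh_div_cosh]
      exact div_pos (Real.sinh_pos_iff.mpr (by positivity)) (Real.cosh_pos _)
    have h1 : kN * tanh (kN*d) * ν₁ = ν₁ * kN ^ 2 * d * (tanh (kN*d)/(kN*d)) := by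
      field_simp
    have h2 : νN * (k₁ * tanh (k₁*d)) = νN * k₁ ^ 2 * d * (tanh (k₁*d)/(k₁*d)) := by
      field_simp
    rw [h1, h2]
    have : ν₁ * kN ^ 2 * d * (tanh (kN*d)/(kN*d)) ≤ νN * k₁ ^ 2 * d * (tanh (kN*d)/(kN*d)) := by
      apply mul_le_mul_of_nonneg_right _ hApos.le
      nlinarith
    linarith [this]
  · have : tanh (kN*d)/(kN*d) - tanh (k₁*d)/(k₁*d) < 0 := by linarith
    have hpos : 0 < νN * k₁^2 * d := by positivity
    exact mul_neg_of_pos_of_neg hpos this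
end

section
/- Let 0 < k₁ < k_N, d > 0, 0 < ν₁ < ν₁^W, 0 < ν_N < ν_N^W with ν_j^W = k_j·tanh(k_jd). If ν₁·k_N/k₁ − ν_N·k₁/k_N ≤ 0, then U(0) < 0 and there exists δ > 0 such that U(h) < 0 for all h ∈ (d−δ, d), where U is the function from the inverse sloshing problem. Consequently, the number of zeros of U in (0,d) is not equal to one (U has either no zero or at least two zeros in (0,d), counting the behavior of the continuous function U which vanishes at d). -/
open Real

/-- sinh x / x is strictly increasing: for 0 < a < b, b * sinh a < a * sinh b. -/
lemma sinh_ratio_lt {a b : ℝ} (ha : 0 < a) (hab : a < b) :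
    b * Real.sinh a < a * Real.sinh b := by
  have hb : 0 < b := ha.trans hab
  have hconv : StrictConvexOn ℝ (Set.Ici (0:ℝ)) Real.sinh := by
    apply strictConvexOn_of_deriv2_pos (convex_Ici 0) Real.continuous_sinh.continuousOn
    intro x hx
    rw [interior_Ici] at hx
    have h2 : deriv^[2] Real.sinh = Real.sinh := by
      ext y
      simp [Function.iterate_succ, Real.deriv_sinh, Real.deriv_cosh]
    rw [h2]
    exact Real.sinh_pos_iff.mpr hx
  have h0 : (0:ℝ) ∈ Set.Ici (0:ℝ) := Set.mem_Ici.mpr le_rfl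
  have hbmem : b ∈ Set.Ici (0:ℝ) := Set.mem_Ici.mpr hb.le
  have hne : (0:ℝ) ≠ b := hb.ne
  have hw1 : (0:ℝ) < 1 - a / b := by
    have : a / b < 1 := (div_lt_one hb).mpr hab
    linarith
  have hw2 : (0:ℝ) < a / b := div_pos ha hb
  have hsum : (1 - a / b) + a / b = 1 := by ring
  have key := hconv.2 h0 hbmem hne hw1 hw2 hsum
  have harg : (1 - a / b) • (0:ℝ) + (a / b) • b = a := by
    rw [smul_eq_mul, smul_eq_mul, mul_zero, zero_add]
    field_simp
  rw [harg, Real.sinh_zero] at key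
  have : Real.sinh a < a / b * Real.sinh b := by
    simpa using key
  calc b * Real.sinh a < b * (a / b * Real.sinh b) := by
        exact (mul_lt_mul_iff_right₀ hb).mpr this
    _ = a * Real.sinh b := by field_simp

/-- k * tanh-type comparison in sinh/cosh form: for 0 < s < t, x > 0,
    s * sinh (t*x) * cosh (s*x) < t * sinh (s*x) * cosh (t*x). -/
lemma tanh_ratio_lt {s t x : ℝ} (hs : 0 < s) (hst : s < t) (hx : 0 < x) :
    s * Real.sinh (t*x) * Real.cosh (s*x) < t * Real.sinh (s*x) * Real.cosh (t*x) := by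
  have h0 : (0:ℝ) < (t - s) * x := by
    have := sub_pos.mpr hst
    positivity
  have h1 : (t - s) * x < (t + s) * x := by nlinarith
  have key := sinh_ratio_lt h0 h1
  have e1 : Real.sinh ((t - s) * x) =
      Real.sinh (t*x) * Real.cosh (s*x) - Real.cosh (t*x) * Real.sinh (s*x) := by
    rw [show (t - s) * x = t*x - s*x by ring, Real.sinh_sub]
  have e2 : Real.sinh ((t + s) * x) =
      Real.sinh (t*x) * Real.cosh (s*x) + Real.cosh (t*x) * Real.sinh (s*x) := by
    rw [show (t + s) * x = t*x + s*x by ring, Real.sinh_add]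
  rw [e1, e2] at key
  nlinarith [key, hx]

/-- x < sinh x * cosh x for x > 0 -/
lemma self_lt_sinh_mul_cosh {x : ℝ} (hx : 0 < x) : x < Real.sinh x * Real.cosh x := by
  have h1 : x < Real.sinh x := Real.self_lt_sinh_iff.mpr hx
  have h2 : 1 ≤ Real.cosh x := Real.one_le_cosh x
  nlinarith [Real.sinh_pos_iff.mpr hx]

lemma key_identity (k h d c : ℝ) (hk : k ≠ 0) :
    ((d-h) * Real.cosh (k*(d-h)) * (Real.sinh (k*h) - c*k*Real.cosh (k*h))
      + Real.sinh (k*(d-h)) * (h*Real.cosh (k*h) - (c*Real.cosh (k*h) + c*k*(h*Real.sinh (k*h)))))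
      * (k * (Real.sinh (k*d) - c*k*Real.cosh (k*d)))
    - Real.sinh (k*(d-h)) * (Real.sinh (k*h) - c*k*Real.cosh (k*h))
      * ((Real.sinh (k*d) - c*k*Real.cosh (k*d))
        + k * (d*Real.cosh (k*d) - (c*Real.cosh (k*d) + c*k*(d*Real.sinh (k*d)))))
    = -(2*k) * ( (Real.sinh (k*(d-h)))^2
          * ((1+c^2*k^2) * Real.sinh (k*h) * Real.cosh (k*h) / (2*k) - c * Real.sinh (k*h)^2
              + (c^2*k^2-1)*h/2)
        + (Real.sinh (k*h) - c*k*Real.cosh (k*h))^2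
          * (Real.sinh (k*(d-h)) * Real.cosh (k*(d-h)) / (2*k) - (d-h)/2) ) := by
  have e1 : k*(d-h) = k*d - k*h := by ring
  rw [e1, Real.sinh_sub, Real.cosh_sub]
  rw [Real.sinh_eq (k*d), Real.cosh_eq (k*d), Real.sinh_eq (k*h), Real.cosh_eq (k*h)]
  rw [Real.exp_neg (k*d), Real.exp_neg (k*h)]
  have hA : Real.exp (k*h) ≠ 0 := (Real.exp_pos _).ne'
  have hB : Real.exp (k*d) ≠ 0 := (Real.exp_pos _).ne'
  field_simp
  ring
lemma I2_pos {k e : ℝ} (hk : 0 < k) (he : 0 < e) :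
    0 < Real.sinh (k*e) * Real.cosh (k*e) / (2*k) - e/2 := by
  have h := self_lt_sinh_mul_cosh (mul_pos hk he)
  rw [sub_pos, div_lt_div_iff₀ (by norm_num) (by positivity)]
  nlinarith

lemma I1_nonneg {k h c : ℝ} (hk : 0 < k) (hh : 0 ≤ h) (hc : 0 < c) :
    0 ≤ (1+c^2*k^2) * Real.sinh (k*h) * Real.cosh (k*h) / (2*k) - c * Real.sinh (k*h)^2
        + (c^2*k^2-1)*h/2 := by
  set t := k*h with ht
  have htnn : 0 ≤ t := by positivity
  have hS : t ≤ Real.sinh t := by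
    rcases eq_or_lt_of_le htnn with h0 | h0
    · simp [← h0]
    · exact (Real.self_lt_sinh_iff.mpr h0).le
  have hC : 1 ≤ Real.cosh t := Real.one_le_cosh t
  have hC2 : Real.cosh t ^ 2 = 1 + Real.sinh t ^ 2 := Real.cosh_sq' t
  have hSnn : 0 ≤ Real.sinh t := le_trans htnn hS
  have hC2' : Real.sinh t^2 * Real.cosh t^2 = Real.sinh t^2 + Real.sinh t^4 := by
    rw [hC2]; ring
  have hSCt : 0 ≤ Real.sinh t * Real.cosh t + t :=
    add_nonneg (mul_nonneg hSnn (Real.cosh_pos t).le) htnn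
  have hS2t2 : 0 ≤ Real.sinh t^2 - t^2 := by nlinarith
  have expand : (Real.sinh t * Real.cosh t + t) *
        ((1+c^2*k^2) * Real.sinh t * Real.cosh t - 2*(c*k) * Real.sinh t^2 + (c^2*k^2-1)*t)
      = ((Real.sinh t * Real.cosh t + t)*(c*k) - Real.sinh t^2)^2
        + (Real.sinh t^2 - t^2) := by
    linear_combination (Real.sinh t^2) * hC2
  have keymul : 0 ≤ (Real.sinh t * Real.cosh t + t) *
      ((1+c^2*k^2) * Real.sinh t * Real.cosh t - 2*(c*k) * Real.sinh t^2 + (c^2*k^2-1)*t) := by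
    rw [expand]
    exact add_nonneg (sq_nonneg _) hS2t2
  have key : 0 ≤ (1+c^2*k^2) * Real.sinh t * Real.cosh t - 2*(c*k) * Real.sinh t^2
      + (c^2*k^2-1)*t := by
    rcases eq_or_lt_of_le hSCt with h0 | h0
    · have hSC0 : Real.sinh t * Real.cosh t = 0 ∧ t = 0 := by
        constructor <;> nlinarith [mul_nonneg hSnn (Real.cosh_pos t).le]
      have hS0 : Real.sinh t = 0 := by
        rcases mul_eq_zero.mp hSC0.1 with h | h
        · exact h
        · exact absurd h (Real.cosh_pos t).ne'
      rw [hS0, hSC0.2]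
      ring_nf
      simp [hS0]
    · have := div_nonneg keymul h0.le
      rwa [mul_div_cancel_left₀ _ h0.ne'] at this
  have hkh : h = t / k := by rw [ht]; field_simp
  rw [hkh]
  have h2k : (0:ℝ) < 2*k := by positivity
  have : (1+c^2*k^2) * Real.sinh t * Real.cosh t / (2*k) - c * Real.sinh t^2
        + (c^2*k^2-1)*(t/k)/2
      = ((1+c^2*k^2) * Real.sinh t * Real.cosh t - 2*(c*k) * Real.sinh t^2
        + (c^2*k^2-1)*t) / (2*k) := by
    field_simp
  rw [this]
  exact div_nonneg key h2k.le

lemma I1_pos {k h c : ℝ} (hk : 0 < k) (hh : 0 < h) (hc : 0 < c) :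
    0 < (1+c^2*k^2) * Real.sinh (k*h) * Real.cosh (k*h) / (2*k) - c * Real.sinh (k*h)^2
        + (c^2*k^2-1)*h/2 := by
  set t := k*h with ht
  have htpos : 0 < t := by positivity
  have hS : t < Real.sinh t := Real.self_lt_sinh_iff.mpr htpos
  have hC : 1 ≤ Real.cosh t := Real.one_le_cosh t
  have hC2 : Real.cosh t ^ 2 = 1 + Real.sinh t ^ 2 := Real.cosh_sq' t
  have hSnn : 0 < Real.sinh t := lt_trans htpos hS
  have key : 0 < (1+c^2*k^2) * Real.sinh t * Real.cosh t - 2*(c*k) * Real.sinh t^2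
      + (c^2*k^2-1)*t := by
    nlinarith [sq_nonneg ((Real.sinh t * Real.cosh t + t)*(c*k) - Real.sinh t^2),
      mul_pos hk hc, sq_nonneg (c*k),
      mul_pos hSnn (Real.cosh_pos t)]
  have hkh : h = t / k := by rw [ht]; field_simp
  rw [hkh]
  have : (1+c^2*k^2) * Real.sinh t * Real.cosh t / (2*k) - c * Real.sinh t^2
        + (c^2*k^2-1)*(t/k)/2
      = ((1+c^2*k^2) * Real.sinh t * Real.cosh t - 2*(c*k) * Real.sinh t^2
        + (c^2*k^2-1)*t) / (2*k) := by
    field_simp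
  rw [this]
  exact div_pos key (by positivity)

/-- Monotonicity in c of H_c(k)/c (two-point form). -/
lemma c_mono {k d h c' c'' : ℝ} (hk : 0 < k) (hh : 0 ≤ h) (hhd : h < d)
    (hc' : 0 < c') (hcc : c' ≤ c'')
    (hP : c''*k*Real.cosh (k*d) < Real.sinh (k*d)) :
    Real.sinh (k*(d-h)) * (Real.sinh (k*h) - c''*k*Real.cosh (k*h))
        / (k * (Real.sinh (k*d) - c''*k*Real.cosh (k*d))) / c''
      ≤ Real.sinh (k*(d-h)) * (Real.sinh (k*h) - c'*k*Real.cosh (k*h))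
        / (k * (Real.sinh (k*d) - c'*k*Real.cosh (k*d))) / c' := by
  have hc'' : 0 < c'' := lt_of_lt_of_le hc' hcc
  have hchd := Real.cosh_pos (k*d)
  have hchh := Real.cosh_pos (k*h)
  have hShnn : 0 ≤ Real.sinh (k*h) := Real.sinh_nonneg_iff.mpr (by positivity)
  have hD'' : 0 < Real.sinh (k*d) - c''*k*Real.cosh (k*d) := sub_pos.mpr hP
  have hD' : 0 < Real.sinh (k*d) - c'*k*Real.cosh (k*d) := by
    have : c'*k*Real.cosh (k*d) ≤ c''*k*Real.cosh (k*d) := by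
      apply mul_le_mul_of_nonneg_right _ hchd.le
      exact mul_le_mul_of_nonneg_right hcc hk.le
    linarith
  have hwnn : 0 ≤ Real.sinh (k*(d-h)) := Real.sinh_nonneg_iff.mpr (by nlinarith)
  have hsub : Real.sinh (k*d) * Real.cosh (k*h) - Real.cosh (k*d) * Real.sinh (k*h)
      = Real.sinh (k*(d-h)) := by
    rw [show k*(d-h) = k*d - k*h by ring, Real.sinh_sub]
  have hw2 : 0 ≤ Real.sinh (k*d) * Real.cosh (k*h) - Real.cosh (k*d) * Real.sinh (k*h) := by
    rw [hsub]; exact hwnn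
  -- Q(c'') ≥ 0
  have hQ : 0 ≤ Real.sinh (k*h) * Real.sinh (k*d)
      - 2*(c''*k) * (Real.sinh (k*h) * Real.cosh (k*d))
      + (c''*k)^2 * (Real.cosh (k*h) * Real.cosh (k*d)) := by
    nlinarith [sq_nonneg (c''*k*Real.cosh (k*h)*Real.cosh (k*d) - Real.sinh (k*h)*Real.cosh (k*d)),
      mul_nonneg (mul_nonneg hShnn hchd.le) hw2, mul_pos hchh hchd]
  -- E2(0) ≥ 0
  have hE0 : 0 ≤ Real.sinh (k*h) * (Real.sinh (k*d) - c''*k*Real.cosh (k*d)) :=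
    mul_nonneg hShnn hD''.le
  -- E2 ≥ 0
  have hE2 : 0 ≤ Real.sinh (k*h) * Real.sinh (k*d)
      - (c'+c'')*k * (Real.sinh (k*h) * Real.cosh (k*d))
      + c'*c''*k^2 * (Real.cosh (k*h) * Real.cosh (k*d)) := by
    have hid : c'' * (Real.sinh (k*h) * Real.sinh (k*d)
        - (c'+c'')*k * (Real.sinh (k*h) * Real.cosh (k*d))
        + c'*c''*k^2 * (Real.cosh (k*h) * Real.cosh (k*d)))
      = (c''-c') * (Real.sinh (k*h) * (Real.sinh (k*d) - c''*k*Real.cosh (k*d)))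
        + c' * (Real.sinh (k*h) * Real.sinh (k*d)
          - 2*(c''*k) * (Real.sinh (k*h) * Real.cosh (k*d))
          + (c''*k)^2 * (Real.cosh (k*h) * Real.cosh (k*d))) := by ring
    have hnn : 0 ≤ c'' * (Real.sinh (k*h) * Real.sinh (k*d)
        - (c'+c'')*k * (Real.sinh (k*h) * Real.cosh (k*d))
        + c'*c''*k^2 * (Real.cosh (k*h) * Real.cosh (k*d))) := by
      rw [hid]
      have := mul_nonneg (sub_nonneg.mpr hcc) hE0
      have := mul_nonneg hc'.le hQ
      linarith
    exact (mul_nonneg_iff_of_pos_left hc'').mp hnn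
  -- cross-multiplied comparison
  rw [div_div, div_div, div_le_div_iff₀ (by positivity) (by positivity)]
  have hkey : Real.sinh (k*(d-h)) * (Real.sinh (k*h) - c'*k*Real.cosh (k*h))
        * (k * (Real.sinh (k*d) - c''*k*Real.cosh (k*d)) * c'')
      - Real.sinh (k*(d-h)) * (Real.sinh (k*h) - c''*k*Real.cosh (k*h))
        * (k * (Real.sinh (k*d) - c'*k*Real.cosh (k*d)) * c')
      = k * Real.sinh (k*(d-h)) * ((c''-c') * (Real.sinh (k*h) * Real.sinh (k*d)
          - (c'+c'')*k * (Real.sinh (k*h) * Real.cosh (k*d))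
          + c'*c''*k^2 * (Real.cosh (k*h) * Real.cosh (k*d)))) := by ring
  nlinarith [mul_nonneg (mul_nonneg (mul_nonneg hk.le hwnn) (sub_nonneg.mpr hcc)) hE2]
set_option maxHeartbeats 1000000 in
/-- Strict monotonicity in k of the diagonal Green's function. -/
lemma green_lt {h d c α β : ℝ} (hh : 0 ≤ h) (hhd : h < d) (hc : 0 < c)
    (hα : 0 < α) (hαβ : α < β)
    (hPβ : c*β*Real.cosh (β*d) < Real.sinh (β*d)) :
    Real.sinh (β*(d-h)) * (Real.sinh (β*h) - c*β*Real.cosh (β*h))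
        / (β * (Real.sinh (β*d) - c*β*Real.cosh (β*d)))
      < Real.sinh (α*(d-h)) * (Real.sinh (α*h) - c*α*Real.cosh (α*h))
        / (α * (Real.sinh (α*d) - c*α*Real.cosh (α*d))) := by
  have hd : 0 < d := lt_of_le_of_lt hh hhd
  have hβ : 0 < β := hα.trans hαβ
  have hP : ∀ k, 0 < k → k ≤ β → c*k*Real.cosh (k*d) < Real.sinh (k*d) := by
    intro k hk0 hkb
    rcases eq_or_lt_of_le hkb with rfl | hlt
    · exact hPβ
    · have ht := tanh_ratio_lt hk0 hlt hd
      have hcb := Real.cosh_pos (β*d)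
      have hck := Real.cosh_pos (k*d)
      nlinarith [mul_pos hβ hcb, mul_pos hk0 hck,
        mul_lt_mul_of_pos_right hPβ (mul_pos hk0 hck)]
  set F : ℝ → ℝ := fun k => Real.sinh (k*(d-h)) * (Real.sinh (k*h) - c*k*Real.cosh (k*h))
      / (k * (Real.sinh (k*d) - c*k*Real.cosh (k*d))) with hF
  have hanti : StrictAntiOn F (Set.Icc α β) := by
    apply strictAntiOn_of_deriv_neg (convex_Icc α β)
    · apply ContinuousOn.div
      · fun_prop
      · fun_prop
      · intro k hk
        have hk0 : 0 < k := lt_of_lt_of_le hα hk.1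
        exact (mul_pos hk0 (sub_pos.mpr (hP k hk0 hk.2))).ne'
    · intro k hk
      rw [interior_Icc] at hk
      have hk0 : 0 < k := hα.trans hk.1
      have hDk : 0 < Real.sinh (k*d) - c*k*Real.cosh (k*d) :=
        sub_pos.mpr (hP k hk0 hk.2.le)
      -- derivative pieces
      have h1 : HasDerivAt (fun k : ℝ => Real.sinh (k*(d-h))) ((d-h) * Real.cosh (k*(d-h))) k := by
        simpa [mul_comm, Function.comp_def] using (Real.hasDerivAt_sinh (k*(d-h))).comp k (hasDerivAt_mul_const (d-h))
      have h2 : HasDerivAt (fun k : ℝ => Real.sinh (k*h)) (h * Real.cosh (k*h)) k := by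
        simpa [mul_comm, Function.comp_def] using (Real.hasDerivAt_sinh (k*h)).comp k (hasDerivAt_mul_const h)
      have h3 : HasDerivAt (fun k : ℝ => Real.cosh (k*h)) (h * Real.sinh (k*h)) k := by
        simpa [mul_comm, Function.comp_def] using (Real.hasDerivAt_cosh (k*h)).comp k (hasDerivAt_mul_const h)
      have h4 : HasDerivAt (fun k : ℝ => Real.sinh (k*d)) (d * Real.cosh (k*d)) k := by
        simpa [mul_comm, Function.comp_def] using (Real.hasDerivAt_sinh (k*d)).comp k (hasDerivAt_mul_const d)
      have h5 : HasDerivAt (fun k : ℝ => Real.cosh (k*d)) (d * Real.sinh (k*d)) k := by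
        simpa [mul_comm, Function.comp_def] using (Real.hasDerivAt_cosh (k*d)).comp k (hasDerivAt_mul_const d)
      have hvh : HasDerivAt (fun k : ℝ => c*k*Real.cosh (k*h))
          (c * Real.cosh (k*h) + c*k*(h * Real.sinh (k*h))) k := by
        have := ((hasDerivAt_id k).const_mul c).mul h3
        simpa [Pi.mul_def] using this
      have hvd : HasDerivAt (fun k : ℝ => c*k*Real.cosh (k*d))
          (c * Real.cosh (k*d) + c*k*(d * Real.sinh (k*d))) k := by
        have := ((hasDerivAt_id k).const_mul c).mul h5
        simpa [Pi.mul_def] using this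
      have hnum : HasDerivAt (fun k : ℝ => Real.sinh (k*(d-h)) * (Real.sinh (k*h) - c*k*Real.cosh (k*h)))
          ((d-h) * Real.cosh (k*(d-h)) * (Real.sinh (k*h) - c*k*Real.cosh (k*h))
            + Real.sinh (k*(d-h)) * (h*Real.cosh (k*h) - (c*Real.cosh (k*h) + c*k*(h*Real.sinh (k*h))))) k :=
        h1.mul (h2.sub hvh)
      have hden : HasDerivAt (fun k : ℝ => k * (Real.sinh (k*d) - c*k*Real.cosh (k*d)))
          (1 * (Real.sinh (k*d) - c*k*Real.cosh (k*d))
            + k * (d*Real.cosh (k*d) - (c*Real.cosh (k*d) + c*k*(d*Real.sinh (k*d))))) k :=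
        (hasDerivAt_id k).mul (h4.sub hvd)
      have hden_ne : k * (Real.sinh (k*d) - c*k*Real.cosh (k*d)) ≠ 0 :=
        (mul_pos hk0 hDk).ne'
      have hHder := hnum.div hden hden_ne
      simp only [Pi.div_def] at hHder
      rw [hF, hHder.deriv]
      apply div_neg_of_neg_of_pos
      · have hid := key_identity k h d c hk0.ne'
        have hw : 0 < Real.sinh (k*(d-h)) :=
          Real.sinh_pos_iff.mpr (by nlinarith)
        have hI2 := I2_pos hk0 (by linarith : (0:ℝ) < d - h)
        have hgoal : ((d-h) * Real.cosh (k*(d-h)) * (Real.sinh (k*h) - c*k*Real.cosh (k*h))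
            + Real.sinh (k*(d-h)) * (h*Real.cosh (k*h) - (c*Real.cosh (k*h) + c*k*(h*Real.sinh (k*h)))))
            * (k * (Real.sinh (k*d) - c*k*Real.cosh (k*d)))
          - Real.sinh (k*(d-h)) * (Real.sinh (k*h) - c*k*Real.cosh (k*h))
            * (1 * (Real.sinh (k*d) - c*k*Real.cosh (k*d))
              + k * (d*Real.cosh (k*d) - (c*Real.cosh (k*d) + c*k*(d*Real.sinh (k*d)))))
          = -(2*k) * ( (Real.sinh (k*(d-h)))^2
              * ((1+c^2*k^2) * Real.sinh (k*h) * Real.cosh (k*h) / (2*k) - c * Real.sinh (k*h)^2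
                  + (c^2*k^2-1)*h/2)
            + (Real.sinh (k*h) - c*k*Real.cosh (k*h))^2
              * (Real.sinh (k*(d-h)) * Real.cosh (k*(d-h)) / (2*k) - (d-h)/2) ) := by
          linear_combination hid
        rw [hgoal]
        have hX : 0 < (Real.sinh (k*(d-h)))^2
              * ((1+c^2*k^2) * Real.sinh (k*h) * Real.cosh (k*h) / (2*k) - c * Real.sinh (k*h)^2
                  + (c^2*k^2-1)*h/2)
            + (Real.sinh (k*h) - c*k*Real.cosh (k*h))^2
              * (Real.sinh (k*(d-h)) * Real.cosh (k*(d-h)) / (2*k) - (d-h)/2) := by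
          rcases eq_or_lt_of_le hh with h0 | h0
          · have hv2 : 0 < (Real.sinh (k*h) - c*k*Real.cosh (k*h))^2 := by
              rw [← h0]
              simp only [mul_zero, Real.sinh_zero, Real.cosh_zero, mul_one, zero_sub]
              have := mul_pos hc hk0
              nlinarith
            have hI1 := I1_nonneg hk0 hh hc
            linarith [mul_pos hv2 hI2, mul_nonneg (sq_nonneg (Real.sinh (k*(d-h)))) hI1]
          · have hI1 := I1_pos hk0 h0 hc
            linarith [mul_pos (pow_pos hw 2) hI1,
              mul_nonneg (sq_nonneg (Real.sinh (k*h) - c*k*Real.cosh (k*h))) hI2.le]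
        linarith [mul_pos hk0 hX]
      · positivity
  exact hanti (Set.mem_Icc.mpr ⟨le_rfl, hαβ.le⟩) (Set.mem_Icc.mpr ⟨hαβ.le, le_rfl⟩) hαβ
lemma U_neg (k₁ kN d ν₁ νN : ℝ) (hk₁ : 0 < k₁) (hkN : k₁ < kN)
    (hd : 0 < d) (hν₁ : 0 < ν₁) (hν₁W : ν₁ < k₁ * tanh (k₁*d))
    (hνN : 0 < νN) (hνNW : νN < kN * tanh (kN*d))
    (hineq : ν₁ * kN / k₁ - νN * k₁ / kN ≤ 0)
    (h : ℝ) (hh : 0 ≤ h) (hhd : h < d) :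
    (ν₁/k₁) * (k₁ * tanh (k₁*d) - ν₁) * cosh (k₁*d) * sinh (kN*(d-h))
        * (kN * sinh (kN*h) - νN * cosh (kN*h))
      - (νN/kN) * (kN * tanh (kN*d) - νN) * cosh (kN*d) * sinh (k₁*(d-h))
        * (k₁ * sinh (k₁*h) - ν₁ * cosh (k₁*h)) < 0 := by
  have hkN0 : 0 < kN := hk₁.trans hkN
  obtain ⟨c', rfl⟩ : ∃ c', ν₁ = c' * k₁^2 := ⟨ν₁/k₁^2, by field_simp⟩
  obtain ⟨c'', rfl⟩ : ∃ c'', νN = c'' * kN^2 := ⟨νN/kN^2, by field_simp⟩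
  have hch1 := Real.cosh_pos (k₁*d)
  have hchN := Real.cosh_pos (kN*d)
  have hc' : 0 < c' := by nlinarith [pow_pos hk₁ 2]
  have hc''0 : 0 < c'' := by nlinarith [pow_pos hkN0 2]
  have hcc : c' ≤ c'' := by
    have h1 : c' * k₁ ^ 2 * kN / k₁ - c'' * kN ^ 2 * k₁ / kN ≤ 0 := hineq
    have e1 : c' * k₁ ^ 2 * kN / k₁ = c' * k₁ * kN := by field_simp
    have e2 : c'' * kN ^ 2 * k₁ / kN = c'' * k₁ * kN := by field_simp
    rw [e1, e2] at h1
    nlinarith [mul_pos hk₁ hkN0]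
  have hP'' : c''*kN*Real.cosh (kN*d) < Real.sinh (kN*d) := by
    rw [Real.tanh_eq_sinh_div_cosh] at hνNW
    have h2 := mul_lt_mul_of_pos_right hνNW hchN
    have e : kN * (Real.sinh (kN*d)/Real.cosh (kN*d)) * Real.cosh (kN*d) = kN * Real.sinh (kN*d) := by
      field_simp
    rw [e] at h2
    nlinarith
  have hP' : c'*k₁*Real.cosh (k₁*d) < Real.sinh (k₁*d) := by
    rw [Real.tanh_eq_sinh_div_cosh] at hν₁W
    have h2 := mul_lt_mul_of_pos_right hν₁W hch1
    have e : k₁ * (Real.sinh (k₁*d)/Real.cosh (k₁*d)) * Real.cosh (k₁*d) = k₁ * Real.sinh (k₁*d) := by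
      field_simp
    rw [e] at h2
    nlinarith
  have hP'N : c'*kN*Real.cosh (kN*d) < Real.sinh (kN*d) := by
    have hmm : c'*kN*Real.cosh (kN*d) ≤ c''*kN*Real.cosh (kN*d) := by
      have h4 := mul_le_mul_of_nonneg_right hcc hkN0.le
      exact mul_le_mul_of_nonneg_right h4 hchN.le
    linarith
  have hgreen := green_lt hh hhd hc' hk₁ hkN hP'N
  have hmono := c_mono hkN0 hh hhd hc' hcc hP''
  have hdivlt : Real.sinh (kN*(d-h)) * (Real.sinh (kN*h) - c'*kN*Real.cosh (kN*h))
        / (kN * (Real.sinh (kN*d) - c'*kN*Real.cosh (kN*d))) / c'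
      < Real.sinh (k₁*(d-h)) * (Real.sinh (k₁*h) - c'*k₁*Real.cosh (k₁*h))
        / (k₁ * (Real.sinh (k₁*d) - c'*k₁*Real.cosh (k₁*d))) / c' :=
    (div_lt_div_iff_of_pos_right hc').mpr hgreen
  have hchain := lt_of_le_of_lt hmono hdivlt
  have hD1 : 0 < Real.sinh (k₁*d) - c'*k₁*Real.cosh (k₁*d) := sub_pos.mpr hP'
  have hDN : 0 < Real.sinh (kN*d) - c''*kN*Real.cosh (kN*d) := sub_pos.mpr hP''
  have hK : 0 < c'*c''*k₁*kN*(k₁*(Real.sinh (k₁*d) - c'*k₁*Real.cosh (k₁*d)))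
      *(kN*(Real.sinh (kN*d) - c''*kN*Real.cosh (kN*d))) :=
    mul_pos (mul_pos (mul_pos (mul_pos (mul_pos hc' hc''0) hk₁) hkN0)
      (mul_pos hk₁ hD1)) (mul_pos hkN0 hDN)
  have hUeq : (c'*k₁^2/k₁) * (k₁ * Real.tanh (k₁*d) - c'*k₁^2) * Real.cosh (k₁*d) * Real.sinh (kN*(d-h))
        * (kN * Real.sinh (kN*h) - c''*kN^2 * Real.cosh (kN*h))
      - (c''*kN^2/kN) * (kN * Real.tanh (kN*d) - c''*kN^2) * Real.cosh (kN*d) * Real.sinh (k₁*(d-h))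
        * (k₁ * Real.sinh (k₁*h) - c'*k₁^2 * Real.cosh (k₁*h))
      = (c'*c''*k₁*kN*(k₁*(Real.sinh (k₁*d) - c'*k₁*Real.cosh (k₁*d)))
          *(kN*(Real.sinh (kN*d) - c''*kN*Real.cosh (kN*d))))
        * (Real.sinh (kN*(d-h)) * (Real.sinh (kN*h) - c''*kN*Real.cosh (kN*h))
            / (kN * (Real.sinh (kN*d) - c''*kN*Real.cosh (kN*d))) / c''
          - Real.sinh (k₁*(d-h)) * (Real.sinh (k₁*h) - c'*k₁*Real.cosh (k₁*h))
            / (k₁ * (Real.sinh (k₁*d) - c'*k₁*Real.cosh (k₁*d))) / c') := by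
    rw [Real.tanh_eq_sinh_div_cosh, Real.tanh_eq_sinh_div_cosh]
    have hDN' : Real.sinh (d * kN) - kN * c'' * Real.cosh (d * kN) ≠ 0 := by
      rw [mul_comm d kN]; intro h0; linarith
    field_simp [hD1.ne', hDN.ne', hDN']
  rw [hUeq]
  exact mul_neg_of_pos_of_neg hK (sub_neg.mpr hchain)

theorem U_no_unique_zero (k₁ kN d ν₁ νN : ℝ) (hk₁ : 0 < k₁) (hkN : k₁ < kN)
    (hd : 0 < d) (hν₁ : 0 < ν₁) (hν₁W : ν₁ < k₁ * tanh (k₁*d))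
    (hνN : 0 < νN) (hνNW : νN < kN * tanh (kN*d))
    (hineq : ν₁ * kN / k₁ - νN * k₁ / kN ≤ 0) :
    let U : ℝ → ℝ := fun h =>
      (ν₁/k₁) * (k₁ * tanh (k₁*d) - ν₁) * cosh (k₁*d) * sinh (kN*(d-h))
          * (kN * sinh (kN*h) - νN * cosh (kN*h))
        - (νN/kN) * (kN * tanh (kN*d) - νN) * cosh (kN*d) * sinh (k₁*(d-h))
          * (k₁ * sinh (k₁*h) - ν₁ * cosh (k₁*h))
    U 0 < 0 ∧
      (∃ δ > 0, ∀ h : ℝ, d - δ < h → h < d → U h < 0) ∧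
      ¬ ({h : ℝ | h ∈ Set.Ioo 0 d ∧ U h = 0}.ncard = 1) := by
  intro U
  have hU : ∀ h : ℝ, 0 ≤ h → h < d → U h < 0 := fun h hh hhd =>
    U_neg k₁ kN d ν₁ νN hk₁ hkN hd hν₁ hν₁W hνN hνNW hineq h hh hhd
  refine ⟨hU 0 le_rfl hd, ⟨d, hd, fun h h1 h2 => hU h (by linarith) h2⟩, ?_⟩
  have hempty : {h : ℝ | h ∈ Set.Ioo 0 d ∧ U h = 0} = ∅ := by
    ext x
    simp only [Set.mem_setOf_eq, Set.mem_Ioo, Set.mem_empty_iff_false, iff_false, not_and]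
    rintro ⟨hx0, hxd⟩
    exact (hU x hx0.le hxd).ne
  rw [hempty]
  simp
end

section
/- Let 0 < k₁ < k_N, d > 0, 0 < ν₁ < ν₁^W, ν₁ < ν_N < ν_N^W with ν_j^W = k_j·tanh(k_jd), and suppose ν_N^W·ν₁ = ν_N·ν₁^W and ν₁·k_N/k₁ − ν_N·k₁/k_N > 0. Then U(0) = 0 and U(h) > 0 for all sufficiently small h > 0; indeed U(h) = h·(ν_N^W·ν₁^W − ν_N·ν₁)·(ν₁·k_N/k₁ − ν_N·k₁/k_N)·cosh(k_Nd)·cosh(k₁d) + o(h) as h → 0⁺, with positive leading coefficient. -/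
open Real Filter Asymptotics

theorem U_asymptotics_at_zero (k₁ kN d ν₁ νN : ℝ) (hk₁ : 0 < k₁) (hkN : k₁ < kN)
    (hd : 0 < d) (hν₁ : 0 < ν₁) (hν₁W : ν₁ < k₁ * tanh (k₁*d))
    (hν₁N : ν₁ < νN) (hνNW : νN < kN * tanh (kN*d))
    (hprod : (kN * tanh (kN*d)) * ν₁ = νN * (k₁ * tanh (k₁*d)))
    (hineq : 0 < ν₁ * kN / k₁ - νN * k₁ / kN) :
    let U : ℝ → ℝ := fun h =>
      (ν₁/k₁) * (k₁ * tanh (k₁*d) - ν₁) * cosh (k₁*d) * sinh (kN*(d-h))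
          * (kN * sinh (kN*h) - νN * cosh (kN*h))
        - (νN/kN) * (kN * tanh (kN*d) - νN) * cosh (kN*d) * sinh (k₁*(d-h))
          * (k₁ * sinh (k₁*h) - ν₁ * cosh (k₁*h))
    let C : ℝ := ((kN * tanh (kN*d)) * (k₁ * tanh (k₁*d)) - νN * ν₁)
        * (ν₁ * kN / k₁ - νN * k₁ / kN) * cosh (kN*d) * cosh (k₁*d)
    U 0 = 0 ∧ 0 < C ∧
      (∃ δ > 0, ∀ h : ℝ, 0 < h → h < δ → 0 < U h) ∧
      (fun h => U h - h * C) =o[nhdsWithin 0 (Set.Ioi 0)] (fun h : ℝ => h) := by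
  intro U C
  have hk₁' : k₁ ≠ 0 := ne_of_gt hk₁
  have hkN0 : (0:ℝ) < kN := lt_trans hk₁ hkN
  have hkN' : kN ≠ 0 := ne_of_gt hkN0
  have c1pos : (0:ℝ) < Real.cosh (k₁*d) := Real.cosh_pos _
  have cNpos : (0:ℝ) < Real.cosh (kN*d) := Real.cosh_pos _
  have c1 : Real.cosh (k₁*d) ≠ 0 := ne_of_gt c1pos
  have cN : Real.cosh (kN*d) ≠ 0 := ne_of_gt cNpos
  have s1 : Real.sinh (k₁*d) = Real.tanh (k₁*d) * Real.cosh (k₁*d) := by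
    rw [Real.tanh_eq_sinh_div_cosh]; field_simp
  have sN : Real.sinh (kN*d) = Real.tanh (kN*d) * Real.cosh (kN*d) := by
    rw [Real.tanh_eq_sinh_div_cosh]; field_simp
  -- U 0 = 0
  have hU0 : U 0 = 0 := by
    show (ν₁/k₁) * (k₁ * tanh (k₁*d) - ν₁) * cosh (k₁*d) * sinh (kN*(d-0))
          * (kN * sinh (kN*0) - νN * cosh (kN*0))
        - (νN/kN) * (kN * tanh (kN*d) - νN) * cosh (kN*d) * sinh (k₁*(d-0))
          * (k₁ * sinh (k₁*0) - ν₁ * cosh (k₁*0)) = 0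
    simp only [sub_zero, mul_zero, Real.sinh_zero, Real.cosh_zero, s1, sN]
    field_simp
    rw [show d * kN = kN * d from mul_comm d kN]
    linear_combination (ν₁ * νN * cosh (k₁*d) * cosh (kN*d)) * hprod
  -- C > 0
  have hC : 0 < C := by
    show 0 < ((kN * tanh (kN*d)) * (k₁ * tanh (k₁*d)) - νN * ν₁)
        * (ν₁ * kN / k₁ - νN * k₁ / kN) * cosh (kN*d) * cosh (k₁*d)
    have h1 : 0 < (kN * tanh (kN*d)) * (k₁ * tanh (k₁*d)) - νN * ν₁ :=
      sub_pos.mpr (mul_lt_mul'' hνNW hν₁W (le_of_lt (lt_trans hν₁ hν₁N)) (le_of_lt hν₁))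
    exact mul_pos (mul_pos (mul_pos h1 hineq) cNpos) c1pos
  -- derivative
  have hfN : HasDerivAt (fun h : ℝ => Real.sinh (kN*(d-h))) (Real.cosh (kN*d) * (-kN)) 0 := by
    have h0 : HasDerivAt (fun h : ℝ => kN*(d-h)) (-kN) 0 := by
      simpa using ((hasDerivAt_const (0:ℝ) d).sub (hasDerivAt_id 0)).const_mul kN
    simpa using h0.sinh
  have hf1 : HasDerivAt (fun h : ℝ => Real.sinh (k₁*(d-h))) (Real.cosh (k₁*d) * (-k₁)) 0 := by
    have h0 : HasDerivAt (fun h : ℝ => k₁*(d-h)) (-k₁) 0 := by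
      simpa using ((hasDerivAt_const (0:ℝ) d).sub (hasDerivAt_id 0)).const_mul k₁
    simpa using h0.sinh
  have hlinN : HasDerivAt (fun h : ℝ => kN*h) kN 0 := by
    simpa using (hasDerivAt_id (0:ℝ)).const_mul kN
  have hlin1 : HasDerivAt (fun h : ℝ => k₁*h) k₁ 0 := by
    simpa using (hasDerivAt_id (0:ℝ)).const_mul k₁
  have hgN : HasDerivAt (fun h : ℝ => kN * Real.sinh (kN*h) - νN * Real.cosh (kN*h))
      (kN*kN) 0 := by
    have := ((hlinN.sinh).const_mul kN).sub ((hlinN.cosh).const_mul νN)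
    simpa [Pi.sub_def] using this
  have hg1 : HasDerivAt (fun h : ℝ => k₁ * Real.sinh (k₁*h) - ν₁ * Real.cosh (k₁*h))
      (k₁*k₁) 0 := by
    have := ((hlin1.sinh).const_mul k₁).sub ((hlin1.cosh).const_mul ν₁)
    simpa [Pi.sub_def] using this
  have hterm1 := ((hfN.const_mul ((ν₁/k₁) * (k₁ * tanh (k₁*d) - ν₁) * cosh (k₁*d))).mul hgN)
  have hterm2 := ((hf1.const_mul ((νN/kN) * (kN * tanh (kN*d) - νN) * cosh (kN*d))).mul hg1)
  have hderiv : HasDerivAt U C 0 := by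
    have big := hterm1.sub hterm2
    convert big using 1
    show C = _
    simp only [C, mul_zero, sub_zero, Real.sinh_zero, Real.cosh_zero, mul_one, zero_sub, s1, sN]
    field_simp
    rw [show d * k₁ = k₁ * d from mul_comm d k₁]
    linear_combination (ν₁*kN^2 + νN*k₁^2) * hprod
    all_goals rfl
  -- little o on nhds 0
  have hlo : (fun h : ℝ => U h - h * C) =o[nhds 0] (fun h : ℝ => h) := by
    have h1 := (hasDerivAt_iff_isLittleO.mp hderiv)
    have h2 : (fun h : ℝ => U h - U 0 - (h - 0) • C) = (fun h : ℝ => U h - h * C) := by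
      funext h; simp [hU0, smul_eq_mul]
    have h3 : (fun h : ℝ => h - (0:ℝ)) = (fun h : ℝ => h) := by funext h; simp
    rw [h2, h3] at h1
    exact h1
  have hloW : (fun h : ℝ => U h - h * C) =o[nhdsWithin 0 (Set.Ioi 0)] (fun h : ℝ => h) :=
    hlo.mono nhdsWithin_le_nhds
  refine ⟨hU0, hC, ?_, hloW⟩
  -- positivity for small h
  have hev := hloW.def (by linarith : (0:ℝ) < C/2)
  obtain ⟨δ, hδ, hsub⟩ := Metric.mem_nhdsWithin_iff.mp hev
  refine ⟨δ, hδ, fun h hh hhδ => ?_⟩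
  have hmem : h ∈ Metric.ball (0:ℝ) δ ∩ Set.Ioi 0 := by
    constructor
    · simp only [Metric.mem_ball, Real.dist_eq, sub_zero, abs_of_pos hh]
      exact hhδ
    · exact hh
  have hb := hsub hmem
  simp only [Set.mem_setOf_eq, Real.norm_eq_abs] at hb
  rw [abs_of_pos hh] at hb
  nlinarith [neg_abs_le (U h - h * C), hC, hh]
end

section
/- Let 0 < k₁ < k_N, d > 0, and suppose 0 < ν₁ < ν₁^W, ν₁ < ν_N < ν_N^W, ν₁·k_N/k₁ − ν_N·k₁/k_N > 0, and ν_N^W·ν₁ − ν_N·ν₁^W < 0, where ν_j^W = k_j·tanh(k_jd). If moreover U is continuously differentiable on [0,d] and U′ vanishes at exactly one point of (0,d), then U has exactly one zero in the open interval (0,d). -/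
open Real

private lemma aux_sinh (k d x : ℝ) :
    HasDerivAt (fun h : ℝ => Real.sinh (k*(d-h))) (Real.cosh (k*(d-x)) * -k) x := by
  have h1 : HasDerivAt (fun h : ℝ => k*(d-h)) (-k) x := by
    simpa using ((hasDerivAt_id x).const_sub d).const_mul k
  exact h1.sinh

private lemma aux_poly (k ν x : ℝ) :
    HasDerivAt (fun h : ℝ => k * Real.sinh (k*h) - ν * Real.cosh (k*h))
      (k * (Real.cosh (k*x) * k) - ν * (Real.sinh (k*x) * k)) x := by
  have hs : HasDerivAt (fun h : ℝ => k*h) k x := by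
    simpa using (hasDerivAt_id x).const_mul k
  exact (hs.sinh.const_mul k).sub (hs.cosh.const_mul ν)

theorem U_unique_zero (k₁ kN d ν₁ νN : ℝ) (hk₁ : 0 < k₁) (hkN : k₁ < kN)
    (hd : 0 < d) (hν₁ : 0 < ν₁) (hν₁W : ν₁ < k₁ * tanh (k₁*d))
    (hν₁N : ν₁ < νN) (hνNW : νN < kN * tanh (kN*d))
    (hineq1 : 0 < ν₁ * kN / k₁ - νN * k₁ / kN)
    (hineq2 : (kN * tanh (kN*d)) * ν₁ - νN * (k₁ * tanh (k₁*d)) < 0) :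
    let U : ℝ → ℝ := fun h =>
      (ν₁/k₁) * (k₁ * tanh (k₁*d) - ν₁) * cosh (k₁*d) * sinh (kN*(d-h))
          * (kN * sinh (kN*h) - νN * cosh (kN*h))
        - (νN/kN) * (kN * tanh (kN*d) - νN) * cosh (kN*d) * sinh (k₁*(d-h))
          * (k₁ * sinh (k₁*h) - ν₁ * cosh (k₁*h))
    ContDiffOn ℝ 1 U (Set.Icc 0 d) →
    (∃! x : ℝ, x ∈ Set.Ioo 0 d ∧ deriv U x = 0) →
    ∃! x : ℝ, x ∈ Set.Ioo 0 d ∧ U x = 0 := by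
  intro U hC hcrit
  have hkN0 : 0 < kN := hk₁.trans hkN
  have hνN : 0 < νN := hν₁.trans hν₁N
  have hc1 : (0:ℝ) < cosh (k₁*d) := cosh_pos _
  have hcN : (0:ℝ) < cosh (kN*d) := cosh_pos _
  have hP1 : 0 < k₁ * tanh (k₁*d) - ν₁ := by linarith
  have hPN : 0 < kN * tanh (kN*d) - νN := by linarith
  have hcont : Continuous U := by unfold U; fun_prop
  -- U d = 0
  have hUd : U d = 0 := by simp [U]
  -- U 0 < 0
  have hU0 : U 0 < 0 := by
    have e : U 0 = (ν₁*νN/(k₁*kN)) *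
        (ν₁*kN*cosh (k₁*d)*sinh (kN*d) - νN*k₁*cosh (kN*d)*sinh (k₁*d)) := by
      show _ - _ = _
      rw [tanh_eq_sinh_div_cosh, tanh_eq_sinh_div_cosh]
      simp only [mul_zero, sub_zero, Real.sinh_zero, Real.cosh_zero, mul_one]
      field_simp
      ring
    rw [e]
    have key : ν₁*kN*cosh (k₁*d)*sinh (kN*d) - νN*k₁*cosh (kN*d)*sinh (k₁*d) < 0 := by
      rw [tanh_eq_sinh_div_cosh, tanh_eq_sinh_div_cosh] at hineq2
      have h2 : (kN * (sinh (kN*d)/cosh (kN*d)) * ν₁ - νN * (k₁ * (sinh (k₁*d)/cosh (k₁*d))))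
          * (cosh (kN*d) * cosh (k₁*d)) < 0 :=
        mul_neg_of_neg_of_pos hineq2 (by positivity)
      have hne1 : cosh (k₁*d) ≠ 0 := hc1.ne'
      have hneN : cosh (kN*d) ≠ 0 := hcN.ne'
      field_simp at h2
      rw [mul_comm d k₁] at h2
      nlinarith [h2]
    have hpos : 0 < ν₁*νN/(k₁*kN) := by positivity
    exact mul_neg_of_pos_of_neg hpos key
  -- derivative at d
  set A := (ν₁/k₁) * (k₁ * tanh (k₁*d) - ν₁) * cosh (k₁*d) with hA
  set B := (νN/kN) * (kN * tanh (kN*d) - νN) * cosh (kN*d) with hB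
  set L := ((Real.cosh (kN*(d-d)) * -kN * A * (kN * Real.sinh (kN*d) - νN * Real.cosh (kN*d))
          + A * Real.sinh (kN*(d-d)) * (kN * (Real.cosh (kN*d) * kN) - νN * (Real.sinh (kN*d) * kN)))
        - (Real.cosh (k₁*(d-d)) * -k₁ * B * (k₁ * Real.sinh (k₁*d) - ν₁ * Real.cosh (k₁*d))
          + B * Real.sinh (k₁*(d-d)) * (k₁ * (Real.cosh (k₁*d) * k₁) - ν₁ * (Real.sinh (k₁*d) * k₁)))) with hLdef
  have HD : HasDerivAt U
      ((Real.cosh (kN*(d-d)) * -kN * A * (kN * Real.sinh (kN*d) - νN * Real.cosh (kN*d))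
          + A * Real.sinh (kN*(d-d)) * (kN * (Real.cosh (kN*d) * kN) - νN * (Real.sinh (kN*d) * kN)))
        - (Real.cosh (k₁*(d-d)) * -k₁ * B * (k₁ * Real.sinh (k₁*d) - ν₁ * Real.cosh (k₁*d))
          + B * Real.sinh (k₁*(d-d)) * (k₁ * (Real.cosh (k₁*d) * k₁) - ν₁ * (Real.sinh (k₁*d) * k₁)))) d := by
    clear_value L
    have H1 := (((aux_sinh kN d d).const_mul A).mul (aux_poly kN νN d))
    have H2 := (((aux_sinh k₁ d d).const_mul B).mul (aux_poly k₁ ν₁ d))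
    have := H1.sub H2
    refine this.congr_deriv ?_
    ring
  rw [← hLdef] at HD
  have hLneg : L < 0 := by
    have e : L = cosh (k₁*d) * cosh (kN*d) * (k₁*tanh (k₁*d) - ν₁) * (kN*tanh (kN*d) - νN)
        * (νN*k₁/kN - ν₁*kN/k₁) := by
      rw [hLdef, hA, hB]
      simp only [sub_self, mul_zero, Real.sinh_zero, Real.cosh_zero, one_mul, zero_mul,
        mul_one, add_zero]
      rw [tanh_eq_sinh_div_cosh, tanh_eq_sinh_div_cosh]
      field_simp
      ring
    rw [e]
    have : νN*k₁/kN - ν₁*kN/k₁ < 0 := by linarith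
    have hpos : 0 < cosh (k₁*d) * cosh (kN*d) * (k₁*tanh (k₁*d) - ν₁) * (kN*tanh (kN*d) - νN) := by
      positivity
    exact mul_neg_of_pos_of_neg hpos this
  -- find a point with U > 0 near d
  have hslope : Filter.Tendsto (slope U d) (nhdsWithin d {d}ᶜ) (nhds L) :=
    hasDerivAt_iff_tendsto_slope.mp HD
  have hev : ∀ᶠ h in nhdsWithin d (Set.Iio d), slope U d h < 0 ∧ h ∈ Set.Ioo 0 d := by
    have h1 : ∀ᶠ h in nhdsWithin d {d}ᶜ, slope U d h < 0 :=
      hslope.eventually (Filter.Tendsto.eventually_lt_const hLneg Filter.tendsto_id)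
    have hmono : nhdsWithin d (Set.Iio d) ≤ nhdsWithin d {d}ᶜ :=
      nhdsWithin_mono d (fun x hx => ne_of_lt hx)
    have h2 : ∀ᶠ h in nhdsWithin d (Set.Iio d), h ∈ Set.Ioo 0 d :=
      Filter.eventually_of_mem (Ioo_mem_nhdsLT hd) (fun x hx => hx)
    exact (h1.filter_mono hmono).and h2
  obtain ⟨h₀, hs0, hh₀⟩ := hev.exists
  have hUh₀ : 0 < U h₀ := by
    have hne : h₀ - d < 0 := by linarith [hh₀.2]
    rw [slope_def_field] at hs0
    have : (U h₀ - U d) / (h₀ - d) < 0 := hs0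
    rw [hUd, sub_zero] at this
    rcases div_neg_iff.mp this with ⟨h1, h2⟩ | ⟨h1, h2⟩
    · linarith
    · linarith
  -- existence of a zero by IVT
  have hIVT : (0:ℝ) ∈ Set.Ioo (U 0) (U h₀) := ⟨hU0, hUh₀⟩
  obtain ⟨x, hx, hUx⟩ := intermediate_value_Ioo (le_of_lt hh₀.1)
    (hcont.continuousOn (s := Set.Icc 0 h₀)) hIVT
  have hxIoo : x ∈ Set.Ioo 0 d := ⟨hx.1, hx.2.trans hh₀.2⟩
  -- uniqueness
  have huniq : ∀ a b : ℝ, a ∈ Set.Ioo 0 d → b ∈ Set.Ioo 0 d → U a = 0 → U b = 0 →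
      a < b → False := by
    intro a b ha hb hUa hUb hab
    obtain ⟨c₁, hc₁, hdc₁⟩ := exists_deriv_eq_zero hab
      (hcont.continuousOn (s := Set.Icc a b)) (hUa.trans hUb.symm)
    obtain ⟨c₂, hc₂, hdc₂⟩ := exists_deriv_eq_zero hb.2
      (hcont.continuousOn (s := Set.Icc b d)) (hUb.trans hUd.symm)
    obtain ⟨z, _, hz⟩ := hcrit
    have e1 : c₁ = z := hz c₁ ⟨⟨lt_trans ha.1 hc₁.1, lt_trans hc₁.2 hb.2⟩, hdc₁⟩
    have e2 : c₂ = z := hz c₂ ⟨⟨lt_trans hb.1 hc₂.1, hc₂.2⟩, hdc₂⟩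
    have : c₁ < c₂ := lt_trans hc₁.2 hc₂.1
    rw [e1, e2] at this
    exact lt_irrefl z this
  refine ⟨x, ⟨hxIoo, hUx⟩, ?_⟩
  intro y ⟨hy, hUy⟩
  rcases lt_trichotomy y x with h | h | h
  · exact absurd (huniq y x hy hxIoo hUy hUx h) (fun a => a)
  · exact h
  · exact absurd (huniq x y hxIoo hy hUx hUy h) (fun a => a)
end
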